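/- Suppose the domain D fails the top-two condition for some O' ⊆ O with |O'| ≤ 4, and for every o ∈ O \ O' there is a preference in D whose most-preferred object within O' ∪ {o} is o. Then there exists a non-TTC mechanism on D^N that is individually rational, Pareto efficient (hence pair efficient), and strategyproof. -/

import Mathlib

def top {α : Type*} (P : α → α → Prop) (O' : Set α) (a : α) : Prop :=
  a ∈ O' ∧ ∀ c ∈ O', c ≠ a → P a c

def topTwo {α : Type*} (D : Set (α → α → Prop)) : Prop :=
  ∀ O' : Set α, O'.Nonempty → ∀ a b : α, a ∈ O' → b ∈ O' → a ≠ b →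
    (∃ P ∈ D, top P O' a) → (∃ P ∈ D, top P O' b) →
      ∃ P0 ∈ D, top P0 O' a ∧ top P0 (O' \ {a}) b

/-! Housing market: agents and objects are both `Fin n`; agent i is endowed with
object i. A preference is a strict linear order on objects, modelled as a binary
relation (`P a b` means a is strictly preferred to b). -/

abbrev PrefRel (n : ℕ) := Fin n → Fin n → Prop

/-- A preference profile where agent i's preference must lie in the domain `Ds i`. -/
def Profile (n : ℕ) (Ds : Fin n → Set (PrefRel n)) : Type := {Pr : Fin n → PrefRel n // ∀ i, Pr i ∈ Ds i}

/-- Individual rationality: every agent weakly prefers their assignment to their endowment. -/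
def IR {n : ℕ} {Ds : Fin n → Set (PrefRel n)} (φ : Profile n Ds → Fin n → Fin n) : Prop :=
  ∀ P : Profile n Ds, ∀ i : Fin n, φ P i = i ∨ P.1 i (φ P i) i

/-- Strategyproofness: truth-telling is weakly dominant within the domain. -/
def SP {n : ℕ} {Ds : Fin n → Set (PrefRel n)} (φ : Profile n Ds → Fin n → Fin n) : Prop :=
  ∀ P Q : Profile n Ds, ∀ i : Fin n, (∀ j, j ≠ i → Q.1 j = P.1 j) →
    φ P i = φ Q i ∨ P.1 i (φ P i) (φ Q i)

/-- Pair efficiency: no two agents each strictly prefer the other's assignment. -/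
def PairEff {n : ℕ} {Ds : Fin n → Set (PrefRel n)} (φ : Profile n Ds → Fin n → Fin n) : Prop :=
  ∀ P : Profile n Ds, ∀ i j : Fin n, ¬ (P.1 i (φ P j) (φ P i) ∧ P.1 j (φ P i) (φ P j))

/-- Pareto efficiency: any allocation that weakly improves upon φ(P) for every agent
coincides with φ(P). -/
def ParetoEff {n : ℕ} {Ds : Fin n → Set (PrefRel n)} (φ : Profile n Ds → Fin n → Fin n) : Prop :=
  ∀ P : Profile n Ds, ∀ y : Fin n → Fin n, Function.Bijective y →
    (∀ i, y i = φ P i ∨ P.1 i (y i) (φ P i)) → ∀ i, y i = φ P i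

/-- `x` is the Top Trading Cycles allocation at the profile `Pr`: there is an assignment
of rounds `r` to agents (= objects, via endowment) such that each agent i receives their
most preferred object among objects whose owner is removed no earlier than i, and the
owner of the object i receives is removed in the same round as i. -/
def isTTC {n : ℕ} (Pr : Fin n → PrefRel n) (x : Fin n → Fin n) : Prop :=
  Function.Bijective x ∧ ∃ r : Fin n → ℕ, ∀ i : Fin n,
    r (x i) = r i ∧ ∀ o : Fin n, r i ≤ r o → o ≠ x i → Pr i (x i) o

/-- `D` fails the top-two condition for `O'`. -/
def failsTopTwoFor {α : Type*} (D : Set (α → α → Prop)) (O' : Set α) : Prop :=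
  ∃ a b : α, a ∈ O' ∧ b ∈ O' ∧ a ≠ b ∧
    (∃ P ∈ D, top P O' a) ∧ (∃ P ∈ D, top P O' b) ∧
    ∀ P ∈ D, top P O' a → ¬ top P (O' \ {a}) b



open scoped Classical

noncomputable section

namespace TTCdev

variable {n : ℕ}

lemma sto_asymm {P : PrefRel n} (hP : IsStrictTotalOrder (Fin n) P) {x y : Fin n}
    (h1 : P x y) (h2 : P y x) : False := by
  haveI := hP
  exact irrefl_of P x (trans_of P h1 h2)

lemma exists_max {P : PrefRel n} (hP : IsStrictTotalOrder (Fin n) P) :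
    ∀ {X : Finset (Fin n)}, X.Nonempty → ∃ m, m ∈ X ∧ ∀ j ∈ X, j ≠ m → P m j := by
  haveI := hP
  intro X
  induction X using Finset.induction_on with
  | empty => intro h; simp at h
  | @insert a X' ha ih =>
    intro _
    rcases X'.eq_empty_or_nonempty with h | h
    · subst h
      exact ⟨a, Finset.mem_insert_self a ∅, by simp⟩
    · obtain ⟨m, hm, hmax⟩ := ih h
      have ham : a ≠ m := fun h' => ha (h' ▸ hm)
      rcases trichotomous_of P a m with hlt | heq | hgt
      · refine ⟨a, Finset.mem_insert_self a X', ?_⟩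
        intro j hj hja
        rcases Finset.mem_insert.1 hj with rfl | hj'
        · exact absurd rfl hja
        · rcases eq_or_ne j m with rfl | hjm
          · exact hlt
          · exact trans_of P hlt (hmax j hj' hjm)
      · exact absurd heq ham
      · refine ⟨m, Finset.mem_insert_of_mem hm, ?_⟩
        intro j hj hjm
        rcases Finset.mem_insert.1 hj with rfl | hj'
        · exact hgt
        · exact hmax j hj' hjm

variable [NeZero n]

/-- The `P`-maximum of `X` (junk value if none exists). -/
def maxOn (P : PrefRel n) (X : Finset (Fin n)) : Fin n :=
  if h : ∃ m, m ∈ X ∧ ∀ j ∈ X, j ≠ m → P m j then h.choose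
  else ⟨0, Nat.pos_of_ne_zero (NeZero.ne n)⟩

lemma maxOn_mem {P : PrefRel n} (hP : IsStrictTotalOrder (Fin n) P) {X : Finset (Fin n)}
    (hX : X.Nonempty) : maxOn P X ∈ X := by
  rw [maxOn, dif_pos (exists_max hP hX)]
  exact (exists_max hP hX).choose_spec.1

lemma maxOn_spec {P : PrefRel n} (hP : IsStrictTotalOrder (Fin n) P) {X : Finset (Fin n)}
    (hX : X.Nonempty) : ∀ j ∈ X, j ≠ maxOn P X → P (maxOn P X) j := by
  rw [maxOn, dif_pos (exists_max hP hX)]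
  exact (exists_max hP hX).choose_spec.2

lemma maxOn_eq_of {P : PrefRel n} (hP : IsStrictTotalOrder (Fin n) P) {X : Finset (Fin n)}
    {m : Fin n} (hm : m ∈ X) (hmax : ∀ j ∈ X, j ≠ m → P m j) : maxOn P X = m := by
  by_contra hne
  have hX : X.Nonempty := ⟨m, hm⟩
  exact sto_asymm hP (maxOn_spec hP hX m hm (fun h => hne h.symm))
    (hmax _ (maxOn_mem hP hX) hne)

/-- Pointer map: each agent points at their favourite remaining object. -/
def ptr (Pr : Fin n → PrefRel n) (X : Finset (Fin n)) : Fin n → Fin n :=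
  fun i => maxOn (Pr i) X

def isPer (f : Fin n → Fin n) (i : Fin n) : Prop := ∃ k, 0 < k ∧ f^[k] i = i

/-- periodic points of the pointer map within X -/
def perS (Pr : Fin n → PrefRel n) (X : Finset (Fin n)) : Finset (Fin n) :=
  X.filter (fun i => isPer (ptr Pr X) i)

def core (Pr : Fin n → PrefRel n) (X : Finset (Fin n)) : Finset (Fin n) :=
  if (perS Pr X).Nonempty then perS Pr X else X

lemma perS_subset {Pr : Fin n → PrefRel n} {X : Finset (Fin n)} : perS Pr X ⊆ X :=
  Finset.filter_subset _ _

lemma core_subset {Pr : Fin n → PrefRel n} {X : Finset (Fin n)} : core Pr X ⊆ X := by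
  rw [core]; split
  · exact perS_subset
  · exact Finset.Subset.refl X

lemma core_nonempty {Pr : Fin n → PrefRel n} {X : Finset (Fin n)} (hX : X.Nonempty) :
    (core Pr X).Nonempty := by
  rw [core]; split
  · assumption
  · exact hX

def ttcA (Pr : Fin n → PrefRel n) (X : Finset (Fin n)) : Fin n → Fin n :=
  if hX : X.Nonempty then
    fun i => if i ∈ core Pr X then ptr Pr X i else ttcA Pr (X \ core Pr X) i
  else id
termination_by X.card
decreasing_by
  exact Finset.card_lt_card (Finset.sdiff_ssubset core_subset (core_nonempty hX))

lemma ttcA_of_empty {Pr : Fin n → PrefRel n} {X : Finset (Fin n)} (hX : ¬ X.Nonempty) :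
    ttcA Pr X = id := by rw [ttcA, dif_neg hX]

lemma ttcA_core {Pr : Fin n → PrefRel n} {X : Finset (Fin n)} (hX : X.Nonempty)
    {i : Fin n} (hi : i ∈ core Pr X) : ttcA Pr X i = ptr Pr X i := by
  rw [ttcA, dif_pos hX]; simp [hi]

lemma ttcA_rest {Pr : Fin n → PrefRel n} {X : Finset (Fin n)} (hX : X.Nonempty)
    {i : Fin n} (hi : i ∉ core Pr X) : ttcA Pr X i = ttcA Pr (X \ core Pr X) i := by
  rw [ttcA, dif_pos hX]; simp [hi]

end TTCdev

namespace TTCdev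

variable {n : ℕ} [NeZero n]

section STO

variable {Pr : Fin n → PrefRel n}

lemma ptr_mem (hSTO : ∀ i, IsStrictTotalOrder (Fin n) (Pr i)) {X : Finset (Fin n)}
    (hX : X.Nonempty) (i : Fin n) : ptr Pr X i ∈ X := maxOn_mem (hSTO i) hX

lemma iter_mem (hSTO : ∀ i, IsStrictTotalOrder (Fin n) (Pr i)) {X : Finset (Fin n)}
    (hX : X.Nonempty) (x : Fin n) : ∀ k, 0 < k → (ptr Pr X)^[k] x ∈ X := by
  intro k hk
  obtain ⟨m, rfl⟩ := Nat.exists_eq_succ_of_ne_zero hk.ne'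
  rw [Function.iterate_succ_apply']
  exact ptr_mem hSTO hX _

lemma perS_nonempty (hSTO : ∀ i, IsStrictTotalOrder (Fin n) (Pr i)) {X : Finset (Fin n)}
    (hX : X.Nonempty) : (perS Pr X).Nonempty := by
  obtain ⟨x, hx⟩ := hX
  set f := ptr Pr X with hf
  have hmaps : ∀ k ∈ Finset.range (X.card + 1), f^[k+1] x ∈ X := by
    intro k _; exact iter_mem hSTO ⟨x, hx⟩ x (k+1) (Nat.succ_pos k)
  have hcard : X.card < (Finset.range (X.card + 1)).card := by simp
  obtain ⟨k1, hk1, k2, hk2, hne, heq⟩ :=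
    Finset.exists_ne_map_eq_of_card_lt_of_maps_to hcard hmaps
  rcases Nat.lt_or_ge k1 k2 with hlt | hge
  · refine ⟨f^[k1+1] x, Finset.mem_filter.2 ⟨hmaps k1 hk1, k2 - k1, Nat.sub_pos_of_lt hlt, ?_⟩⟩
    have : (k2 - k1) + (k1 + 1) = k2 + 1 := by omega
    rw [← Function.iterate_add_apply, this, ← heq]
  · have hlt : k2 < k1 := lt_of_le_of_ne hge (fun h => hne h.symm)
    refine ⟨f^[k2+1] x, Finset.mem_filter.2 ⟨hmaps k2 hk2, k1 - k2, Nat.sub_pos_of_lt hlt, ?_⟩⟩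
    have : (k1 - k2) + (k2 + 1) = k1 + 1 := by omega
    rw [← Function.iterate_add_apply, this, heq]

lemma core_eq (hSTO : ∀ i, IsStrictTotalOrder (Fin n) (Pr i)) {X : Finset (Fin n)}
    (hX : X.Nonempty) : core Pr X = perS Pr X := if_pos (perS_nonempty hSTO hX)

lemma mem_core_iff (hSTO : ∀ i, IsStrictTotalOrder (Fin n) (Pr i)) {X : Finset (Fin n)}
    (hX : X.Nonempty) {i : Fin n} :
    i ∈ core Pr X ↔ i ∈ X ∧ isPer (ptr Pr X) i := by
  rw [core_eq hSTO hX, perS, Finset.mem_filter]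

lemma iterate_pred (f : Fin n → Fin n) {k : ℕ} (hk : 0 < k) (x : Fin n) :
    f^[k] x = f^[k-1] (f x) := by
  obtain ⟨m, rfl⟩ := Nat.exists_eq_succ_of_ne_zero hk.ne'
  simp [Function.iterate_succ_apply]

/-- periodic points transfer along a shift of the orbit -/
lemma isPer_shift {f : Fin n → Fin n} {i : Fin n} (h : isPer f i) (l : ℕ) :
    isPer f (f^[l] i) := by
  obtain ⟨k, hk, hper⟩ := h
  exact ⟨k, hk, by rw [← Function.iterate_add_apply, Nat.add_comm, Function.iterate_add_apply, hper]⟩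

lemma isPer_of_orbit {f : Fin n → Fin n} {i j : Fin n} (h : isPer f j) {l : ℕ}
    (hl : f^[l] j = i) : isPer f i := hl ▸ isPer_shift h l

lemma perS_maps (hSTO : ∀ i, IsStrictTotalOrder (Fin n) (Pr i)) {X : Finset (Fin n)}
    (hX : X.Nonempty) {i : Fin n} (hi : i ∈ perS Pr X) : ptr Pr X i ∈ perS Pr X := by
  obtain ⟨hiX, hper⟩ := Finset.mem_filter.1 hi
  refine Finset.mem_filter.2 ⟨ptr_mem hSTO hX i, ?_⟩
  exact isPer_of_orbit hper (l := 1) (by simp)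

/-- on periodic points the pointer map is injective -/
lemma perS_injOn (hSTO : ∀ i, IsStrictTotalOrder (Fin n) (Pr i)) {X : Finset (Fin n)}
    {a b : Fin n} (ha : isPer (ptr Pr X) a) (hb : isPer (ptr Pr X) b)
    (hab : ptr Pr X a = ptr Pr X b) : a = b := by
  set f := ptr Pr X with hf
  obtain ⟨k, hk, hper⟩ : isPer f (f a) := isPer_of_orbit ha (l := 1) (by simp)
  -- transfer the period k to a and b
  have hA : f^[k] a = a := by
    obtain ⟨ka, hka, hpa⟩ := ha
    have h1 : a = f^[ka - 1] (f a) := by rw [← iterate_pred f hka, hpa]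
    rw [h1, ← Function.iterate_add_apply, Nat.add_comm, Function.iterate_add_apply, hper]
  have hB : f^[k] b = b := by
    obtain ⟨kb, hkb, hpb⟩ := hb
    have h1 : b = f^[kb - 1] (f b) := by rw [← iterate_pred f hkb, hpb]
    rw [h1, ← Function.iterate_add_apply, Nat.add_comm, Function.iterate_add_apply, ← hab, hper,
      hab]
  calc a = f^[k] a := hA.symm
    _ = f^[k-1] (f a) := iterate_pred f hk a
    _ = f^[k-1] (f b) := by rw [hab]
    _ = f^[k] b := (iterate_pred f hk b).symm
    _ = b := hB

lemma maxOn_congr {P : PrefRel n} (hP : IsStrictTotalOrder (Fin n) P) {X Y : Finset (Fin n)}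
    (hYX : Y ⊆ X) (hX : X.Nonempty) (hmem : maxOn P X ∈ Y) : maxOn P Y = maxOn P X := by
  apply maxOn_eq_of hP hmem
  intro j hj hne
  exact maxOn_spec hP hX j (hYX hj) hne

lemma ttc_mem (hSTO : ∀ i, IsStrictTotalOrder (Fin n) (Pr i)) :
    ∀ X : Finset (Fin n), ∀ i ∈ X, ttcA Pr X i ∈ X := by
  intro X
  induction X using Finset.strongInduction with
  | _ X ih =>
    intro i hi
    have hX : X.Nonempty := ⟨i, hi⟩
    by_cases hc : i ∈ core Pr X
    · rw [ttcA_core hX hc]; exact ptr_mem hSTO hX i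
    · rw [ttcA_rest hX hc]
      have hss : X \ core Pr X ⊂ X := Finset.sdiff_ssubset core_subset (core_nonempty hX)
      have hmem : i ∈ X \ core Pr X := Finset.mem_sdiff.2 ⟨hi, hc⟩
      exact Finset.sdiff_subset (ih _ hss i hmem)

lemma ttc_notmem : ∀ X : Finset (Fin n), ∀ i : Fin n, i ∉ X → ttcA Pr X i = i := by
  intro X
  induction X using Finset.strongInduction with
  | _ X ih =>
    intro i hi
    rcases X.eq_empty_or_nonempty with rfl | hX
    · rw [ttcA_of_empty (by simp)]; rfl
    · have hc : i ∉ core Pr X := fun h => hi (core_subset h)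
      rw [ttcA_rest hX hc]
      have hss : X \ core Pr X ⊂ X := Finset.sdiff_ssubset core_subset (core_nonempty hX)
      exact ih _ hss i (fun h => hi (Finset.sdiff_subset h))

lemma ttc_injOn (hSTO : ∀ i, IsStrictTotalOrder (Fin n) (Pr i)) :
    ∀ X : Finset (Fin n), ∀ a ∈ X, ∀ b ∈ X, ttcA Pr X a = ttcA Pr X b → a = b := by
  intro X
  induction X using Finset.strongInduction with
  | _ X ih =>
    intro a ha b hb heq
    have hX : X.Nonempty := ⟨a, ha⟩
    have hss : X \ core Pr X ⊂ X := Finset.sdiff_ssubset core_subset (core_nonempty hX)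
    by_cases hca : a ∈ core Pr X <;> by_cases hcb : b ∈ core Pr X
    · rw [ttcA_core hX hca, ttcA_core hX hcb] at heq
      exact perS_injOn hSTO ((mem_core_iff hSTO hX).1 hca).2 ((mem_core_iff hSTO hX).1 hcb).2 heq
    · exfalso
      rw [ttcA_core hX hca, ttcA_rest hX hcb] at heq
      have h1 : ptr Pr X a ∈ core Pr X := by
        rw [core_eq hSTO hX] at hca ⊢
        exact perS_maps hSTO hX hca
      have h2 : ttcA Pr (X \ core Pr X) b ∈ X \ core Pr X :=
        ttc_mem hSTO _ b (Finset.mem_sdiff.2 ⟨hb, hcb⟩)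
      rw [heq] at h1
      exact (Finset.mem_sdiff.1 h2).2 h1
    · exfalso
      rw [ttcA_core hX hcb, ttcA_rest hX hca] at heq
      have h1 : ptr Pr X b ∈ core Pr X := by
        rw [core_eq hSTO hX] at hcb ⊢
        exact perS_maps hSTO hX hcb
      have h2 : ttcA Pr (X \ core Pr X) a ∈ X \ core Pr X :=
        ttc_mem hSTO _ a (Finset.mem_sdiff.2 ⟨ha, hca⟩)
      rw [← heq] at h1
      exact (Finset.mem_sdiff.1 h2).2 h1
    · rw [ttcA_rest hX hca, ttcA_rest hX hcb] at heq
      exact ih _ hss a (Finset.mem_sdiff.2 ⟨ha, hca⟩) b (Finset.mem_sdiff.2 ⟨hb, hcb⟩) heq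

lemma ttc_image (hSTO : ∀ i, IsStrictTotalOrder (Fin n) (Pr i)) (X : Finset (Fin n)) :
    X.image (ttcA Pr X) = X := by
  apply Finset.eq_of_subset_of_card_le
  · intro y hy
    obtain ⟨i, hi, rfl⟩ := Finset.mem_image.1 hy
    exact ttc_mem hSTO X i hi
  · rw [Finset.card_image_of_injOn (fun a ha b hb => ttc_injOn hSTO X a ha b hb)]

lemma ttc_surjOn (hSTO : ∀ i, IsStrictTotalOrder (Fin n) (Pr i)) (X : Finset (Fin n)) :
    ∀ y ∈ X, ∃ i ∈ X, ttcA Pr X i = y := by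
  intro y hy
  have := ttc_image hSTO X
  rw [← this] at hy
  obtain ⟨i, hi, hiy⟩ := Finset.mem_image.1 hy
  exact ⟨i, hi, hiy⟩

lemma ttc_IR (hSTO : ∀ i, IsStrictTotalOrder (Fin n) (Pr i)) :
    ∀ X : Finset (Fin n), ∀ i ∈ X, ttcA Pr X i = i ∨ Pr i (ttcA Pr X i) i := by
  intro X
  induction X using Finset.strongInduction with
  | _ X ih =>
    intro i hi
    have hX : X.Nonempty := ⟨i, hi⟩
    by_cases hc : i ∈ core Pr X
    · rw [ttcA_core hX hc]
      rcases eq_or_ne (ptr Pr X i) i with h | h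
      · exact Or.inl h
      · exact Or.inr (maxOn_spec (hSTO i) hX i hi h.symm)
    · rw [ttcA_rest hX hc]
      have hss : X \ core Pr X ⊂ X := Finset.sdiff_ssubset core_subset (core_nonempty hX)
      exact ih _ hss i (Finset.mem_sdiff.2 ⟨hi, hc⟩)

end STO

end TTCdev

namespace TTCdev

variable {n : ℕ} [NeZero n]

section STO2

variable {Pr : Fin n → PrefRel n}

lemma core_ptr_surj (hSTO : ∀ i, IsStrictTotalOrder (Fin n) (Pr i)) {X : Finset (Fin n)}
    (hX : X.Nonempty) : ∀ c ∈ core Pr X, ∃ j ∈ core Pr X, ptr Pr X j = c := by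
  have himg : (core Pr X).image (ptr Pr X) = core Pr X := by
    apply Finset.eq_of_subset_of_card_le
    · intro y hy
      obtain ⟨j, hj, rfl⟩ := Finset.mem_image.1 hy
      rw [core_eq hSTO hX] at hj ⊢
      exact perS_maps hSTO hX hj
    · rw [Finset.card_image_of_injOn]
      intro a ha b hb hab
      rw [core_eq hSTO hX] at ha hb
      exact perS_injOn hSTO (Finset.mem_coe.1 ha |> (Finset.mem_filter.1 · |>.2))
        ((Finset.mem_filter.1 (Finset.mem_coe.1 hb)).2) hab
  intro c hc
  rw [← himg] at hc
  obtain ⟨j, hj, hjc⟩ := Finset.mem_image.1 hc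
  exact ⟨j, hj, hjc⟩

lemma ttc_PE (hSTO : ∀ i, IsStrictTotalOrder (Fin n) (Pr i)) :
    ∀ X : Finset (Fin n), ∀ y : Fin n → Fin n,
    (∀ a ∈ X, ∀ b ∈ X, y a = y b → a = b) → (∀ i ∈ X, y i ∈ X) →
    (∀ i ∈ X, y i = ttcA Pr X i ∨ Pr i (y i) (ttcA Pr X i)) →
    ∀ i ∈ X, y i = ttcA Pr X i := by
  intro X
  induction X using Finset.strongInduction with
  | _ X ih =>
    intro y hinj hmaps hdom i hi
    have hX : X.Nonempty := ⟨i, hi⟩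
    have hcore : ∀ j ∈ core Pr X, y j = ttcA Pr X j := by
      intro j hj
      rw [ttcA_core hX hj]
      rcases hdom j (core_subset hj) with h | h
      · rw [h, ttcA_core hX hj]
      · rcases eq_or_ne (y j) (ptr Pr X j) with he | hne
        · exact he
        · exfalso
          rw [ttcA_core hX hj] at h
          exact sto_asymm (hSTO j)
            (maxOn_spec (hSTO j) hX (y j) (hmaps j (core_subset hj)) hne) h
    by_cases hc : i ∈ core Pr X
    · exact hcore i hc
    · have hss : X \ core Pr X ⊂ X := Finset.sdiff_ssubset core_subset (core_nonempty hX)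
      have hrest_maps : ∀ j ∈ X \ core Pr X, y j ∈ X \ core Pr X := by
        intro j hj
        obtain ⟨hjX, hjc⟩ := Finset.mem_sdiff.1 hj
        refine Finset.mem_sdiff.2 ⟨hmaps j hjX, fun hyc => ?_⟩
        obtain ⟨l, hl, hly⟩ := core_ptr_surj hSTO hX (y j) hyc
        have : y l = y j := by rw [hcore l hl, ttcA_core hX hl, hly]
        exact hjc ((hinj l (core_subset hl) j hjX this) ▸ hl)
      have hdom' : ∀ j ∈ X \ core Pr X, y j = ttcA Pr (X \ core Pr X) j ∨
          Pr j (y j) (ttcA Pr (X \ core Pr X) j) := by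
        intro j hj
        rw [← ttcA_rest hX (Finset.mem_sdiff.1 hj).2]
        exact hdom j (Finset.mem_sdiff.1 hj).1
      have := ih _ hss y (fun a ha b hb => hinj a (Finset.sdiff_subset ha) b
        (Finset.sdiff_subset hb)) hrest_maps hdom' i (Finset.mem_sdiff.2 ⟨hi, hc⟩)
      rw [this, ttcA_rest hX hc]

lemma ttc_persist (hSTO : ∀ i, IsStrictTotalOrder (Fin n) (Pr i)) :
    ∀ X : Finset (Fin n), ∀ i ∈ X, ∀ o ∈ X, ∀ m : ℕ, (ptr Pr X)^[m] o = i →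
    ttcA Pr X i = o ∨ Pr i (ttcA Pr X i) o := by
  intro X
  induction X using Finset.strongInduction with
  | _ X ih =>
    intro i hi o ho m hlead
    have hX : X.Nonempty := ⟨i, hi⟩
    by_cases hc : i ∈ core Pr X
    · rw [ttcA_core hX hc]
      rcases eq_or_ne (ptr Pr X i) o with he | hne
      · exact Or.inl he
      · exact Or.inr (maxOn_spec (hSTO i) hX o ho (fun h => hne h.symm))
    · have hss : X \ core Pr X ⊂ X := Finset.sdiff_ssubset core_subset (core_nonempty hX)
      set f := ptr Pr X with hfdef
      have hpathX : ∀ j : ℕ, f^[j] o ∈ X := by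
        intro j
        rcases Nat.eq_zero_or_pos j with rfl | hj
        · exact ho
        · exact iter_mem hSTO hX o j hj
      have hpathc : ∀ j : ℕ, j ≤ m → f^[j] o ∉ core Pr X := by
        intro j hj hjc
        apply hc
        rw [mem_core_iff hSTO hX] at hjc ⊢
        refine ⟨hi, isPer_of_orbit hjc.2 (l := m - j) ?_⟩
        rw [← Function.iterate_add_apply]
        have : m - j + j = m := by omega
        rw [this, hlead]
      have hagree : ∀ j : ℕ, j ≤ m → (ptr Pr (X \ core Pr X))^[j] o = f^[j] o := by
        intro j hj
        induction j with
        | zero => rfl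
        | succ l ihl =>
          rw [Function.iterate_succ_apply', Function.iterate_succ_apply',
            ihl (le_trans (Nat.le_succ l) hj)]
          have hmem : maxOn (Pr (f^[l] o)) X ∈ X \ core Pr X := by
            have hmax_eq : maxOn (Pr (f^[l] o)) X = f^[l+1] o := by
              rw [Function.iterate_succ_apply']; rfl
            rw [hmax_eq]
            exact Finset.mem_sdiff.2 ⟨hpathX (l+1), hpathc (l+1) hj⟩
          show maxOn (Pr (f^[l] o)) (X \ core Pr X) = f (f^[l] o)
          have hfr : f (f^[l] o) = maxOn (Pr (f^[l] o)) X := rfl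
          rw [hfr]
          exact maxOn_congr (hSTO _) Finset.sdiff_subset hX hmem
      have hi' : i ∈ X \ core Pr X := Finset.mem_sdiff.2 ⟨hi, hc⟩
      have ho' : o ∈ X \ core Pr X := Finset.mem_sdiff.2 ⟨ho, hpathc 0 (Nat.zero_le m)⟩
      have hlead' : (ptr Pr (X \ core Pr X))^[m] o = i := by
        rw [hagree m (le_refl m), hlead]
      have := ih _ hss i hi' o ho' m hlead'
      rw [ttcA_rest hX hc]
      exact this

lemma isPer_agree {f g : Fin n → Fin n} {i : Fin n} (hagree : ∀ x, x ≠ i → g x = f x)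
    (hiP : ¬ isPer f i) {j : Fin n} (hj : isPer f j) : isPer g j := by
  have horb : ∀ l : ℕ, f^[l] j ≠ i := by
    intro l h
    exact hiP (isPer_of_orbit hj h)
  have hiter : ∀ l : ℕ, g^[l] j = f^[l] j := by
    intro l
    induction l with
    | zero => rfl
    | succ m ihm =>
      rw [Function.iterate_succ_apply', Function.iterate_succ_apply', ihm,
        hagree _ (horb m)]
  obtain ⟨k, hk, hper⟩ := hj
  exact ⟨k, hk, by rw [hiter k, hper]⟩

lemma ttc_SP (hSTO : ∀ i, IsStrictTotalOrder (Fin n) (Pr i)) {Q : Fin n → PrefRel n}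
    (hQSTO : ∀ i, IsStrictTotalOrder (Fin n) (Q i)) {i : Fin n}
    (hagree : ∀ j, j ≠ i → Q j = Pr j) :
    ∀ X : Finset (Fin n), i ∈ X →
      ttcA Pr X i = ttcA Q X i ∨ Pr i (ttcA Pr X i) (ttcA Q X i) := by
  intro X
  induction X using Finset.strongInduction with
  | _ X ih =>
    intro hi
    have hX : X.Nonempty := ⟨i, hi⟩
    have hptr_agree : ∀ x : Fin n, x ≠ i → ptr Q X x = ptr Pr X x := by
      intro x hx
      rw [ptr, ptr, hagree x hx]
    by_cases hcP : i ∈ core Pr X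
    · rw [ttcA_core hX hcP]
      have hvq : ttcA Q X i ∈ X := ttc_mem hQSTO X i hi
      rcases eq_or_ne (ptr Pr X i) (ttcA Q X i) with he | hne
      · exact Or.inl he
      · exact Or.inr (maxOn_spec (hSTO i) hX _ hvq (fun h => hne h.symm))
    · by_cases hcQ : i ∈ core Q X
      · -- i is periodic in the Q-run; its Q-value leads to i in the P-run
        have hperQ : isPer (ptr Q X) i := ((mem_core_iff hQSTO hX).1 hcQ).2
        rw [ttcA_core hX hcQ]
        set f := ptr Q X with hfdef
        have hex : ∃ k, 0 < k ∧ f^[k] i = i := hperQ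
        classical
        set k := Nat.find hex with hkdef
        obtain ⟨hkpos, hkper⟩ := Nat.find_spec hex
        rcases eq_or_lt_of_le (Nat.one_le_iff_ne_zero.2 hkpos.ne') with h1 | h2
        · -- k = 1 : self-cycle, Q-value is i itself
          have : f i = i := by
            have := hkper
            rw [← h1] at this
            simpa using this
          rw [this]
          exact ttc_IR hSTO X i hi
        · -- k ≥ 2
          set o := f i with hodef
          have ho : o ∈ X := ptr_mem hQSTO hX i
          have hmid : ∀ j : ℕ, 0 < j → j < k → f^[j] i ≠ i := by
            intro j hj hjk h
            exact Nat.find_min hex hjk ⟨hj, h⟩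
          have hlead : (ptr Pr X)^[k-1] o = i := by
            have hQlead : ∀ j : ℕ, j ≤ k - 1 → (ptr Pr X)^[j] o = f^[j] o := by
              intro j hj
              induction j with
              | zero => rfl
              | succ l ihl =>
                rw [Function.iterate_succ_apply', Function.iterate_succ_apply',
                  ihl (le_trans (Nat.le_succ l) hj)]
                apply (hptr_agree _ ?_).symm
                show f^[l] o ≠ i
                have : f^[l] o = f^[l+1] i := by
                  rw [hodef, ← Function.iterate_succ_apply]
                rw [this]
                exact hmid (l+1) (Nat.succ_pos l) (by omega)
            rw [hQlead (k-1) (le_refl _)]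
            rw [hodef, ← Function.iterate_succ_apply]
            have : (k-1).succ = k := by omega
            rw [this, hkper]
          exact ttc_persist hSTO X i hi o ho (k-1) hlead
      · -- i not periodic in either run: the cores agree, recurse
        have hnpP : ¬ isPer (ptr Pr X) i := by
          intro h
          exact hcP ((mem_core_iff hSTO hX).2 ⟨hi, h⟩)
        have hnpQ : ¬ isPer (ptr Q X) i := by
          intro h
          exact hcQ ((mem_core_iff hQSTO hX).2 ⟨hi, h⟩)
        have hcore_eq : core Q X = core Pr X := by
          rw [core_eq hSTO hX, core_eq hQSTO hX]
          ext j
          simp only [perS, Finset.mem_filter]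
          constructor
          · rintro ⟨hjX, hper⟩
            exact ⟨hjX, isPer_agree (fun x hx => (hptr_agree x hx).symm) hnpQ hper⟩
          · rintro ⟨hjX, hper⟩
            exact ⟨hjX, isPer_agree hptr_agree hnpP hper⟩
        have hss : X \ core Pr X ⊂ X := Finset.sdiff_ssubset core_subset (core_nonempty hX)
        rw [ttcA_rest hX hcP, ttcA_rest (Pr := Q) hX hcQ, hcore_eq]
        exact ih _ hss (Finset.mem_sdiff.2 ⟨hi, hcP⟩)

end STO2

end TTCdev

namespace TTCdev

variable {n : ℕ} [NeZero n]

lemma isPer1 {f : Fin n → Fin n} {x : Fin n} (h : f x = x) : isPer f x :=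
  ⟨1, Nat.one_pos, by simpa using h⟩

lemma isPer2 {f : Fin n → Fin n} {x y : Fin n} (h1 : f x = y) (h2 : f y = x) : isPer f x :=
  ⟨2, by norm_num, by
    rw [show (2:ℕ) = 1 + 1 from rfl, Function.iterate_succ_apply', Function.iterate_one, h1, h2]⟩

lemma isPer3 {f : Fin n → Fin n} {x y z : Fin n} (h1 : f x = y) (h2 : f y = z) (h3 : f z = x) :
    isPer f x :=
  ⟨3, by norm_num, by
    rw [show (3:ℕ) = 2 + 1 from rfl, Function.iterate_succ_apply',
      show (2:ℕ) = 1 + 1 from rfl, Function.iterate_succ_apply', Function.iterate_one, h1, h2, h3]⟩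

lemma isPer4 {f : Fin n → Fin n} {x y z w : Fin n} (h1 : f x = y) (h2 : f y = z) (h3 : f z = w)
    (h4 : f w = x) : isPer f x :=
  ⟨4, by norm_num, by
    rw [show (4:ℕ) = 3 + 1 from rfl, Function.iterate_succ_apply',
      show (3:ℕ) = 2 + 1 from rfl, Function.iterate_succ_apply',
      show (2:ℕ) = 1 + 1 from rfl, Function.iterate_succ_apply', Function.iterate_one,
      h1, h2, h3, h4]⟩

lemma not_isPer_absorb {f : Fin n → Fin n} {C : Finset (Fin n)}
    (hC : ∀ x ∈ C, f x ∈ C) {x₀ : Fin n} (hx : f x₀ ∈ C) (hx0 : x₀ ∉ C) : ¬ isPer f x₀ := by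
  have horb : ∀ k : ℕ, 0 < k → f^[k] x₀ ∈ C := by
    intro k hk
    induction k with
    | zero => omega
    | succ m ihm =>
      rcases Nat.eq_zero_or_pos m with rfl | hm
      · simpa using hx
      · rw [Function.iterate_succ_apply']
        exact hC _ (ihm hm)
  rintro ⟨k, hk, hper⟩
  exact hx0 (hper ▸ horb k hk)

section STO3

variable {Pr : Fin n → PrefRel n}

lemma core_eq_of (hSTO : ∀ i, IsStrictTotalOrder (Fin n) (Pr i)) {X C : Finset (Fin n)}
    (hX : X.Nonempty) (hC : C ⊆ X) (hper : ∀ i ∈ C, isPer (ptr Pr X) i)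
    (hnper : ∀ i ∈ X, i ∉ C → ¬ isPer (ptr Pr X) i) : core Pr X = C := by
  rw [core_eq hSTO hX]
  ext j
  rw [perS, Finset.mem_filter]
  constructor
  · rintro ⟨hjX, hjper⟩
    by_contra hjC
    exact hnper j hjX hjC hjper
  · intro hj
    exact ⟨hC hj, hper j hj⟩

lemma core_value (hSTO : ∀ i, IsStrictTotalOrder (Fin n) (Pr i)) {X : Finset (Fin n)}
    {i : Fin n} (hi : i ∈ X) (hper : isPer (ptr Pr X) i) : ttcA Pr X i = maxOn (Pr i) X := by
  have hX : X.Nonempty := ⟨i, hi⟩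
  exact ttcA_core hX ((mem_core_iff hSTO hX).2 ⟨hi, hper⟩)

lemma ttc_singleton (hSTO : ∀ i, IsStrictTotalOrder (Fin n) (Pr i)) (x : Fin n) :
    ttcA Pr {x} x = x := by
  have hm : maxOn (Pr x) {x} = x :=
    maxOn_eq_of (hSTO x) (Finset.mem_singleton_self x) (by simp)
  have : isPer (ptr Pr {x}) x := isPer1 hm
  rw [core_value hSTO (Finset.mem_singleton_self x) this, hm]

lemma maxOn_pair_mem (hP : IsStrictTotalOrder (Fin n) P) (x y : Fin n) :
    maxOn P {x, y} = x ∨ maxOn P {x, y} = y := by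
  have := maxOn_mem hP (X := {x, y}) ⟨x, by simp⟩
  simpa using this

lemma maxOn_pair_left (hP : IsStrictTotalOrder (Fin n) P) {x y : Fin n} (hxy : x ≠ y)
    (h : maxOn P {x, y} = x) : P x y := by
  have := maxOn_spec hP (X := {x, y}) ⟨x, by simp⟩ y (by simp) (by rw [h]; exact fun hc => hxy hc.symm)
  rwa [h] at this

lemma maxOn_pair_of (hP : IsStrictTotalOrder (Fin n) P) {x y : Fin n} (hxy : x ≠ y)
    (h : P x y) : maxOn P {x, y} = x := by
  apply maxOn_eq_of hP (by simp)
  intro j hj hne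
  rcases Finset.mem_insert.1 hj with rfl | hj'
  · exact absurd rfl hne
  · rw [Finset.mem_singleton.1 hj']
    exact h

/-- 2-agent market: trade happens iff both point at each other. -/
lemma ttc_pair (hSTO : ∀ i, IsStrictTotalOrder (Fin n) (Pr i)) {x y : Fin n} (hxy : x ≠ y) :
    ttcA Pr {x, y} x =
      (if maxOn (Pr x) {x, y} = y ∧ maxOn (Pr y) {x, y} = x then y else x) := by
  have hxm : x ∈ ({x, y} : Finset (Fin n)) := by simp
  have hym : y ∈ ({x, y} : Finset (Fin n)) := by simp
  have hX : ({x, y} : Finset (Fin n)).Nonempty := ⟨x, hxm⟩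
  rcases maxOn_pair_mem (hSTO x) x y with hx | hx
  · -- x points to itself
    rw [if_neg (by rintro ⟨h1, _⟩; rw [hx] at h1; exact hxy h1)]
    have : isPer (ptr Pr {x, y}) x := isPer1 hx
    rw [core_value hSTO hxm this, hx]
  · rcases maxOn_pair_mem (hSTO y) x y with hy | hy
    · -- mutual: swap
      rw [if_pos ⟨hx, hy⟩]
      have : isPer (ptr Pr {x, y}) x := isPer2 hx hy
      rw [core_value hSTO hxm this, hx]
    · -- y points to itself, x points to y: x not periodic
      rw [if_neg (by rintro ⟨_, h2⟩; rw [hy] at h2; exact hxy h2.symm)]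
      have hynper : isPer (ptr Pr {x, y}) y := isPer1 hy
      have hxnper : ¬ isPer (ptr Pr {x, y}) x := by
        apply not_isPer_absorb (C := {y}) (fun z hz => ?_) (by simpa [ptr] using hx)
          (by simp [hxy])
        rw [Finset.mem_singleton.1 hz]
        simpa [ptr] using hy
      have hcore : core Pr {x, y} = {y} := by
        apply core_eq_of hSTO hX (by simp)
        · intro i hi; rw [Finset.mem_singleton.1 hi]; exact hynper
        · intro i hiX hiC
          rcases Finset.mem_insert.1 hiX with rfl | hi'
          · exact hxnper
          · exact absurd hi' hiC
      rw [ttcA_rest hX (by rw [hcore]; simp [hxy]), hcore]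
      have : ({x, y} : Finset (Fin n)) \ {y} = {x} := by
        ext z
        simp only [Finset.mem_sdiff, Finset.mem_insert, Finset.mem_singleton]
        constructor
        · rintro ⟨rfl | rfl, hz⟩
          · rfl
          · exact absurd rfl hz
        · rintro rfl; exact ⟨Or.inl rfl, fun h => hxy h⟩
      rw [this]
      exact ttc_singleton hSTO x

end STO3

end TTCdev

namespace TTCdev

variable {n : ℕ} [NeZero n]

section VAL

variable {Pr : Fin n → PrefRel n}

lemma maxOn_ne_of_beats {P : PrefRel n} (hP : IsStrictTotalOrder (Fin n) P)
    {X : Finset (Fin n)} {x y : Fin n} (hx : x ∈ X) (hxy : x ≠ y) (h : P x y) :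
    maxOn P X ≠ y := by
  intro hmax
  have hX : X.Nonempty := ⟨x, hx⟩
  exact sto_asymm hP h (by
    have := maxOn_spec hP hX x hx (by rw [hmax]; exact hxy)
    rwa [hmax] at this)

/-- chain lemmas: `a` is periodic -/
lemma perA_aux {f : Fin n → Fin n} {a b u v : Fin n} (hfb : f b = a) (hfa : f a = u)
    (hFu : f u = a ∨ f u = b ∨ f u = v) (himp : f u = v → (f v = a ∨ f v = b)) :
    isPer f a := by
  rcases hFu with h | h | h
  · exact isPer2 hfa h
  · exact isPer3 hfa h hfb
  · rcases himp h with h2 | h2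
    · exact isPer3 hfa h h2
    · exact isPer4 hfa h h2 hfb

/-- chain lemmas: `b` is periodic (pointing at `u`) -/
lemma perB_aux {f : Fin n → Fin n} {a b u v : Fin n} (hfa : f a = b) (hfb : f b = u)
    (hFu : f u = a ∨ f u = b ∨ f u = v) (himp : f u = v → (f v = a ∨ f v = b)) :
    isPer f b := by
  rcases hFu with h | h | h
  · exact isPer3 hfb h hfa
  · exact isPer2 hfb h
  · rcases himp h with h2 | h2
    · exact isPer4 hfb h h2 hfa
    · exact isPer3 hfb h h2

end VAL

section MARKET3

variable {Pr : Fin n → PrefRel n} {S : Finset (Fin n)} {a b c : Fin n}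

/-- value of agent `a` under a truthful non-b-top report, 3 agents -/
lemma val_a3 (hSTO : ∀ i, IsStrictTotalOrder (Fin n) (Pr i))
    (hab : a ≠ b) (hac : a ≠ c) (hbc : b ≠ c) (hS : S = {a, b, c})
    (hχb : maxOn (Pr b) S = a) (hFc : maxOn (Pr c) S ≠ c) :
    ttcA Pr S a = maxOn (Pr a) S := by
  subst hS
  have haS : a ∈ ({a, b, c} : Finset (Fin n)) := by simp
  have hX : ({a, b, c} : Finset (Fin n)).Nonempty := ⟨a, haS⟩
  have hτ : maxOn (Pr a) {a, b, c} ∈ ({a, b, c} : Finset (Fin n)) := maxOn_mem (hSTO a) hX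
  have hfa : ptr Pr {a, b, c} a = maxOn (Pr a) {a, b, c} := rfl
  have hfb : ptr Pr {a, b, c} b = a := hχb
  have hfc : ptr Pr {a, b, c} c = maxOn (Pr c) {a, b, c} := rfl
  have hper : isPer (ptr Pr {a, b, c}) a := by
    rw [Finset.mem_insert, Finset.mem_insert, Finset.mem_singleton] at hτ
    rcases hτ with h | h | h
    · exact isPer1 (hfa.trans h)
    · exact isPer2 (hfa.trans h) hfb
    · have hFc' : maxOn (Pr c) {a, b, c} ∈ ({a, b, c} : Finset (Fin n)) :=
        maxOn_mem (hSTO c) hX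
      rw [Finset.mem_insert, Finset.mem_insert, Finset.mem_singleton] at hFc'
      rcases hFc' with h2 | h2 | h2
      · exact isPer2 (hfa.trans h) (hfc.trans h2)
      · exact isPer3 (hfa.trans h) (hfc.trans h2) hfb
      · exact absurd h2 hFc
  exact core_value hSTO haS hper

/-- value of agent `b` under a truthful non-a-top report, 3 agents -/
lemma val_b3 (hSTO : ∀ i, IsStrictTotalOrder (Fin n) (Pr i))
    (hab : a ≠ b) (hac : a ≠ c) (hbc : b ≠ c) (hS : S = {a, b, c})
    (hχa : maxOn (Pr a) S = b) (hFc : maxOn (Pr c) S ≠ c) :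
    ttcA Pr S b = maxOn (Pr b) S := by
  subst hS
  have hbS : b ∈ ({a, b, c} : Finset (Fin n)) := by simp
  have hX : ({a, b, c} : Finset (Fin n)).Nonempty := ⟨b, hbS⟩
  have hβ : maxOn (Pr b) {a, b, c} ∈ ({a, b, c} : Finset (Fin n)) := maxOn_mem (hSTO b) hX
  have hfa : ptr Pr {a, b, c} a = b := hχa
  have hfb : ptr Pr {a, b, c} b = maxOn (Pr b) {a, b, c} := rfl
  have hfc : ptr Pr {a, b, c} c = maxOn (Pr c) {a, b, c} := rfl
  have hper : isPer (ptr Pr {a, b, c}) b := by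
    rw [Finset.mem_insert, Finset.mem_insert, Finset.mem_singleton] at hβ
    rcases hβ with h | h | h
    · exact isPer2 (hfb.trans h) hfa
    · exact isPer1 (hfb.trans h)
    · have hFc' : maxOn (Pr c) {a, b, c} ∈ ({a, b, c} : Finset (Fin n)) :=
        maxOn_mem (hSTO c) hX
      rw [Finset.mem_insert, Finset.mem_insert, Finset.mem_singleton] at hFc'
      rcases hFc' with h2 | h2 | h2
      · exact isPer3 (hfb.trans h) (hfc.trans h2) hfa
      · exact isPer2 (hfb.trans h) (hfc.trans h2)
      · exact absurd h2 hFc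
  exact core_value hSTO hbS hper

/-- value of agent `c` when a and b swap, 3 agents -/
lemma val_c3 (hSTO : ∀ i, IsStrictTotalOrder (Fin n) (Pr i))
    (hab : a ≠ b) (hac : a ≠ c) (hbc : b ≠ c) (hS : S = {a, b, c})
    (hχa : maxOn (Pr a) S = b) (hχb : maxOn (Pr b) S = a) :
    ttcA Pr S c = c := by
  subst hS
  have hcS : c ∈ ({a, b, c} : Finset (Fin n)) := by simp
  have hX : ({a, b, c} : Finset (Fin n)).Nonempty := ⟨c, hcS⟩
  by_cases hcc : maxOn (Pr c) {a, b, c} = c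
  · exact (core_value hSTO hcS (isPer1 (show ptr Pr {a,b,c} c = c from hcc))).trans hcc
  · have hFc : maxOn (Pr c) {a, b, c} ∈ ({a, b} : Finset (Fin n)) := by
      have := maxOn_mem (hSTO c) hX
      rw [Finset.mem_insert, Finset.mem_insert, Finset.mem_singleton] at this
      rcases this with h | h | h
      · simp [h]
      · simp [h]
      · exact absurd h hcc
    have habs : ∀ x ∈ ({a, b} : Finset (Fin n)), ptr Pr {a,b,c} x ∈ ({a, b} : Finset (Fin n)) := by
      intro x hx
      rcases Finset.mem_insert.1 hx with rfl | hx'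
      · show maxOn (Pr x) {x, b, c} ∈ _; rw [hχa]; simp
      · rw [Finset.mem_singleton.1 hx']
        show maxOn (Pr b) {a, b, c} ∈ _; rw [hχb]; simp
    have hcnot : c ∉ ({a, b} : Finset (Fin n)) := by simp [Ne.symm hac, Ne.symm hbc]
    have hcnper : ¬ isPer (ptr Pr {a,b,c}) c := not_isPer_absorb habs hFc hcnot
    have hcore : core Pr {a,b,c} = {a, b} := by
      apply core_eq_of hSTO hX
      · intro z hz
        rcases Finset.mem_insert.1 hz with rfl | hz'
        · simp
        · rw [Finset.mem_singleton.1 hz']; simp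
      · intro i hi
        rcases Finset.mem_insert.1 hi with rfl | hi'
        · exact isPer2 hχa hχb
        · rw [Finset.mem_singleton.1 hi']
          exact isPer2 hχb hχa
      · intro i hiS hiC
        rw [Finset.mem_insert, Finset.mem_insert, Finset.mem_singleton] at hiS
        rcases hiS with rfl | rfl | rfl
        · exact absurd (by simp) hiC
        · exact absurd (by simp) hiC
        · exact hcnper
    have hrest : ({a,b,c} : Finset (Fin n)) \ core Pr {a,b,c} = {c} := by
      rw [hcore]
      ext z
      simp only [Finset.mem_sdiff, Finset.mem_insert, Finset.mem_singleton]
      constructor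
      · rintro ⟨rfl | rfl | rfl, hz⟩
        · exact absurd (Or.inl rfl) hz
        · exact absurd (Or.inr rfl) hz
        · rfl
      · rintro rfl
        exact ⟨Or.inr (Or.inr rfl), by push_neg; exact ⟨Ne.symm hac, Ne.symm hbc⟩⟩
    rw [ttcA_rest hX (by rw [hcore]; exact hcnot), hrest]
    exact ttc_singleton hSTO c

end MARKET3

end TTCdev

namespace TTCdev

variable {n : ℕ} [NeZero n]

section MARKET4

variable {Pr : Fin n → PrefRel n} {S : Finset (Fin n)} {a b c d : Fin n}

lemma mem4 {x : Fin n} (hx : x ∈ ({a, b, c, d} : Finset (Fin n))) :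
    x = a ∨ x = b ∨ x = c ∨ x = d := by simpa using hx

/-- value of agent `a`, 4 agents, when b points at a and c, d are "tame" -/
lemma val_a4 (hSTO : ∀ i, IsStrictTotalOrder (Fin n) (Pr i))
    (hab : a ≠ b) (hac : a ≠ c) (had : a ≠ d) (hbc : b ≠ c) (hbd : b ≠ d) (hcd : c ≠ d)
    (hS : S = {a, b, c, d})
    (hfb : maxOn (Pr b) S = a) (hFc : maxOn (Pr c) S ≠ c) (hFd : maxOn (Pr d) S ≠ d)
    (hmut : ¬ (maxOn (Pr c) S = d ∧ maxOn (Pr d) S = c)) :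
    ttcA Pr S a = maxOn (Pr a) S := by
  subst hS
  set S : Finset (Fin n) := {a, b, c, d} with hSdef
  have haS : a ∈ S := by simp [hSdef]
  have hX : S.Nonempty := ⟨a, haS⟩
  have pfa : ptr Pr S a = maxOn (Pr a) S := rfl
  have pfb : ptr Pr S b = a := hfb
  have pfc : ptr Pr S c = maxOn (Pr c) S := rfl
  have pfd : ptr Pr S d = maxOn (Pr d) S := rfl
  have hFcmem : maxOn (Pr c) S = a ∨ maxOn (Pr c) S = b ∨ maxOn (Pr c) S = d := by
    rcases mem4 (maxOn_mem (hSTO c) hX) with h | h | h | h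
    · exact Or.inl h
    · exact Or.inr (Or.inl h)
    · exact absurd h hFc
    · exact Or.inr (Or.inr h)
  have hFdmem : maxOn (Pr d) S = a ∨ maxOn (Pr d) S = b ∨ maxOn (Pr d) S = c := by
    rcases mem4 (maxOn_mem (hSTO d) hX) with h | h | h | h
    · exact Or.inl h
    · exact Or.inr (Or.inl h)
    · exact Or.inr (Or.inr h)
    · exact absurd h hFd
  have hper : isPer (ptr Pr S) a := by
    rcases mem4 (maxOn_mem (hSTO a) hX) with h | h | h | h
    · exact isPer1 (pfa.trans h)
    · exact isPer2 (pfa.trans h) pfb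
    · -- a points at c
      refine perA_aux pfb (pfa.trans h) (v := d) ?_ ?_
      · rcases hFcmem with h2 | h2 | h2
        · exact Or.inl (pfc.trans h2)
        · exact Or.inr (Or.inl (pfc.trans h2))
        · exact Or.inr (Or.inr (pfc.trans h2))
      · intro hcd'
        have hFcd : maxOn (Pr c) S = d := pfc.symm.trans hcd'
        rcases hFdmem with h2 | h2 | h2
        · exact Or.inl (pfd.trans h2)
        · exact Or.inr (pfd.trans h2)
        · exact absurd ⟨hFcd, h2⟩ hmut
    · -- a points at d
      refine perA_aux pfb (pfa.trans h) (v := c) ?_ ?_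
      · rcases hFdmem with h2 | h2 | h2
        · exact Or.inl (pfd.trans h2)
        · exact Or.inr (Or.inl (pfd.trans h2))
        · exact Or.inr (Or.inr (pfd.trans h2))
      · intro hdc'
        have hFdc : maxOn (Pr d) S = c := pfd.symm.trans hdc'
        rcases hFcmem with h2 | h2 | h2
        · exact Or.inl (pfc.trans h2)
        · exact Or.inr (pfc.trans h2)
        · exact absurd ⟨h2, hFdc⟩ hmut
  exact core_value hSTO haS hper

/-- value of agent `b`, 4 agents, when a points at b and c, d are "tame" -/
lemma val_b4 (hSTO : ∀ i, IsStrictTotalOrder (Fin n) (Pr i))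
    (hab : a ≠ b) (hac : a ≠ c) (had : a ≠ d) (hbc : b ≠ c) (hbd : b ≠ d) (hcd : c ≠ d)
    (hS : S = {a, b, c, d})
    (hfa : maxOn (Pr a) S = b) (hFc : maxOn (Pr c) S ≠ c) (hFd : maxOn (Pr d) S ≠ d)
    (hmut : ¬ (maxOn (Pr c) S = d ∧ maxOn (Pr d) S = c)) :
    ttcA Pr S b = maxOn (Pr b) S := by
  subst hS
  set S : Finset (Fin n) := {a, b, c, d} with hSdef
  have hbS : b ∈ S := by simp [hSdef]
  have hX : S.Nonempty := ⟨b, hbS⟩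
  have pfa : ptr Pr S a = b := hfa
  have pfb : ptr Pr S b = maxOn (Pr b) S := rfl
  have pfc : ptr Pr S c = maxOn (Pr c) S := rfl
  have pfd : ptr Pr S d = maxOn (Pr d) S := rfl
  have hFcmem : maxOn (Pr c) S = a ∨ maxOn (Pr c) S = b ∨ maxOn (Pr c) S = d := by
    rcases mem4 (maxOn_mem (hSTO c) hX) with h | h | h | h
    · exact Or.inl h
    · exact Or.inr (Or.inl h)
    · exact absurd h hFc
    · exact Or.inr (Or.inr h)
  have hFdmem : maxOn (Pr d) S = a ∨ maxOn (Pr d) S = b ∨ maxOn (Pr d) S = c := by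
    rcases mem4 (maxOn_mem (hSTO d) hX) with h | h | h | h
    · exact Or.inl h
    · exact Or.inr (Or.inl h)
    · exact Or.inr (Or.inr h)
    · exact absurd h hFd
  have hper : isPer (ptr Pr S) b := by
    rcases mem4 (maxOn_mem (hSTO b) hX) with h | h | h | h
    · exact isPer2 (pfb.trans h) pfa
    · exact isPer1 (pfb.trans h)
    · refine perB_aux pfa (pfb.trans h) (v := d) ?_ ?_
      · rcases hFcmem with h2 | h2 | h2
        · exact Or.inl (pfc.trans h2)
        · exact Or.inr (Or.inl (pfc.trans h2))
        · exact Or.inr (Or.inr (pfc.trans h2))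
      · intro hcd'
        have hFcd : maxOn (Pr c) S = d := pfc.symm.trans hcd'
        rcases hFdmem with h2 | h2 | h2
        · exact Or.inl (pfd.trans h2)
        · exact Or.inr (pfd.trans h2)
        · exact absurd ⟨hFcd, h2⟩ hmut
    · refine perB_aux pfa (pfb.trans h) (v := c) ?_ ?_
      · rcases hFdmem with h2 | h2 | h2
        · exact Or.inl (pfd.trans h2)
        · exact Or.inr (Or.inl (pfd.trans h2))
        · exact Or.inr (Or.inr (pfd.trans h2))
      · intro hdc'
        have hFdc : maxOn (Pr d) S = c := pfd.symm.trans hdc'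
        rcases hFcmem with h2 | h2 | h2
        · exact Or.inl (pfc.trans h2)
        · exact Or.inr (pfc.trans h2)
        · exact absurd ⟨h2, hFdc⟩ hmut
  exact core_value hSTO hbS hper

end MARKET4

lemma maxOn_beats {P : PrefRel n} (hP : IsStrictTotalOrder (Fin n) P) {X : Finset (Fin n)}
    {w j : Fin n} (hw : maxOn P X = w) (hj : j ∈ X) (hne : j ≠ w) : P w j := by
  subst hw
  exact maxOn_spec hP ⟨j, hj⟩ j hj hne

section MARKET4B

variable {Pr : Fin n → PrefRel n} {S : Finset (Fin n)} {a b c d : Fin n}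

/-- value of agent `c`, 4 agents, when a and b point at each other:
a and b trade and then c, d trade among themselves. -/
lemma val_uv4 (hSTO : ∀ i, IsStrictTotalOrder (Fin n) (Pr i))
    (hab : a ≠ b) (hac : a ≠ c) (had : a ≠ d) (hbc : b ≠ c) (hbd : b ≠ d) (hcd : c ≠ d)
    (hS : S = {a, b, c, d})
    (hfa : maxOn (Pr a) S = b) (hfb : maxOn (Pr b) S = a) :
    ttcA Pr S c = (if maxOn (Pr c) {c, d} = d ∧ maxOn (Pr d) {c, d} = c then d else c) := by
  subst hS
  set S : Finset (Fin n) := {a, b, c, d} with hSdef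
  have hcS : c ∈ S := by simp [hSdef]
  have hdS : d ∈ S := by simp [hSdef]
  have hX : S.Nonempty := ⟨c, hcS⟩
  have pfa : ptr Pr S a = b := hfa
  have pfb : ptr Pr S b = a := hfb
  have pfc : ptr Pr S c = maxOn (Pr c) S := rfl
  have pfd : ptr Pr S d = maxOn (Pr d) S := rfl
  by_cases hFc : maxOn (Pr c) S = c
  · -- c keeps own
    have hsc : maxOn (Pr c) {c, d} = c :=
      maxOn_pair_of (hSTO c) hcd (maxOn_beats (hSTO c) hFc hdS (Ne.symm hcd))
    rw [if_neg (by rintro ⟨h1, _⟩; rw [hsc] at h1; exact hcd h1)]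
    exact (core_value hSTO hcS (isPer1 (pfc.trans hFc))).trans hFc
  · by_cases hmut : maxOn (Pr c) S = d ∧ maxOn (Pr d) S = c
    · -- mutual S-level swap
      obtain ⟨h1, h2⟩ := hmut
      have hsc : maxOn (Pr c) {c, d} = d := by
        rw [Finset.pair_comm]
        exact maxOn_pair_of (hSTO c) (Ne.symm hcd) (maxOn_beats (hSTO c) h1 hcS (Ne.symm hcd).symm)
      have hsd : maxOn (Pr d) {c, d} = c :=
        maxOn_pair_of (hSTO d) hcd (maxOn_beats (hSTO d) h2 hdS (Ne.symm hcd))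
      rw [if_pos ⟨hsc, hsd⟩]
      exact (core_value hSTO hcS (isPer2 (pfc.trans h1) (pfd.trans h2))).trans h1
    · by_cases hFd : maxOn (Pr d) S = d
      · -- d keeps own; c is absorbed by {a, b, d}
        have hsd : maxOn (Pr d) {c, d} = d := by
          rw [Finset.pair_comm]
          exact maxOn_pair_of (hSTO d) (Ne.symm hcd) (maxOn_beats (hSTO d) hFd hcS hcd)
        have hFcmem : maxOn (Pr c) S ∈ ({a, b, d} : Finset (Fin n)) := by
          rcases mem4 (maxOn_mem (hSTO c) hX) with h | h | h | h
          · simp [hSdef, h]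
          · simp [hSdef, h]
          · exact absurd h hFc
          · simp [hSdef, h]
        have habs : ∀ x ∈ ({a, b, d} : Finset (Fin n)),
            ptr Pr S x ∈ ({a, b, d} : Finset (Fin n)) := by
          intro x hx
          rcases Finset.mem_insert.1 hx with rfl | hx'
          · rw [pfa]; simp
          · rcases Finset.mem_insert.1 hx' with rfl | hx''
            · rw [pfb]; simp
            · rw [Finset.mem_singleton.1 hx'', pfd, hFd]; simp
        have hcnot : c ∉ ({a, b, d} : Finset (Fin n)) := by
          simp [Ne.symm hac, Ne.symm hbc, hcd]
        have hcnper : ¬ isPer (ptr Pr S) c :=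
          not_isPer_absorb habs (by rw [pfc]; exact hFcmem) hcnot
        have hcore : core Pr S = {a, b, d} := by
          apply core_eq_of hSTO hX
          · intro z hz; simp only [hSdef]
            rcases Finset.mem_insert.1 hz with rfl | hz'
            · simp
            · rcases Finset.mem_insert.1 hz' with rfl | hz''
              · simp
              · rw [Finset.mem_singleton.1 hz'']; simp
          · intro i hi
            rcases Finset.mem_insert.1 hi with rfl | hi'
            · exact isPer2 pfa pfb
            · rcases Finset.mem_insert.1 hi' with rfl | hi''
              · exact isPer2 pfb pfa
              · rw [Finset.mem_singleton.1 hi'']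
                exact isPer1 (pfd.trans hFd)
          · intro i hiS hiC
            rcases mem4 hiS with rfl | rfl | rfl | rfl
            · exact absurd (by simp) hiC
            · exact absurd (by simp) hiC
            · exact hcnper
            · exact absurd (by simp) hiC
        have hrest : S \ core Pr S = {c} := by
          rw [hcore]
          ext z
          simp only [hSdef, Finset.mem_sdiff, Finset.mem_insert, Finset.mem_singleton]
          constructor
          · rintro ⟨rfl | rfl | rfl | rfl, hz⟩
            · exact absurd (Or.inl rfl) hz
            · exact absurd (Or.inr (Or.inl rfl)) hz
            · rfl
            · exact absurd (Or.inr (Or.inr rfl)) hz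
          · rintro rfl
            refine ⟨Or.inr (Or.inr (Or.inl rfl)), ?_⟩
            push_neg
            exact ⟨Ne.symm hac, Ne.symm hbc, hcd⟩
        rw [if_neg (by rintro ⟨_, h2⟩; rw [hsd] at h2; exact hcd h2.symm)]
        rw [ttcA_rest hX (by rw [hcore]; exact hcnot), hrest]
        exact ttc_singleton hSTO c
      · -- both c and d fall to the second stage {c, d}
        have hFcmem : maxOn (Pr c) S ∈ ({a, b, d} : Finset (Fin n)) := by
          rcases mem4 (maxOn_mem (hSTO c) hX) with h | h | h | h
          · simp [hSdef, h]
          · simp [hSdef, h]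
          · exact absurd h hFc
          · simp [hSdef, h]
        have hFdmem : maxOn (Pr d) S ∈ ({a, b, c} : Finset (Fin n)) := by
          rcases mem4 (maxOn_mem (hSTO d) hX) with h | h | h | h
          · simp [hSdef, h]
          · simp [hSdef, h]
          · simp [hSdef, h]
          · exact absurd h hFd
        have habsAB : ∀ x ∈ ({a, b} : Finset (Fin n)),
            ptr Pr S x ∈ ({a, b} : Finset (Fin n)) := by
          intro x hx
          rcases Finset.mem_insert.1 hx with rfl | hx'
          · rw [pfa]; simp
          · rw [Finset.mem_singleton.1 hx', pfb]; simp
        have hcnper : ¬ isPer (ptr Pr S) c := by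
          rcases Finset.mem_insert.1 hFcmem with h | h'
          · -- f c = a : absorbed by {a,b}
            exact not_isPer_absorb habsAB (by rw [pfc, h]; simp)
              (by simp [Ne.symm hac, Ne.symm hbc])
          · rcases Finset.mem_insert.1 h' with h | h''
            · exact not_isPer_absorb habsAB (by rw [pfc, h]; simp)
                (by simp [Ne.symm hac, Ne.symm hbc])
            · -- f c = d, and then f d ∈ {a, b}
              have hFcd : maxOn (Pr c) S = d := Finset.mem_singleton.1 h''
              have hFdab : maxOn (Pr d) S ∈ ({a, b} : Finset (Fin n)) := by
                rcases Finset.mem_insert.1 hFdmem with h2 | h2'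
                · simp [h2]
                · rcases Finset.mem_insert.1 h2' with h2 | h2''
                  · simp [h2]
                  · exact absurd ⟨hFcd, Finset.mem_singleton.1 h2''⟩ hmut
              have habsABD : ∀ x ∈ ({a, b, d} : Finset (Fin n)),
                  ptr Pr S x ∈ ({a, b, d} : Finset (Fin n)) := by
                intro x hx
                rcases Finset.mem_insert.1 hx with rfl | hx'
                · rw [pfa]; simp
                · rcases Finset.mem_insert.1 hx' with rfl | hx''
                  · rw [pfb]; simp
                  · rw [Finset.mem_singleton.1 hx'', pfd]
                    rcases Finset.mem_insert.1 hFdab with h2 | h2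
                    · simp [h2]
                    · simp [Finset.mem_singleton.1 h2]
              exact not_isPer_absorb habsABD (by rw [pfc, hFcd]; simp)
                (by simp [Ne.symm hac, Ne.symm hbc, hcd])
        have hdnper : ¬ isPer (ptr Pr S) d := by
          rcases Finset.mem_insert.1 hFdmem with h | h'
          · exact not_isPer_absorb habsAB (by rw [pfd, h]; simp)
              (by simp [Ne.symm had, Ne.symm hbd])
          · rcases Finset.mem_insert.1 h' with h | h''
            · exact not_isPer_absorb habsAB (by rw [pfd, h]; simp)
                (by simp [Ne.symm had, Ne.symm hbd])
            · -- f d = c, and then f c ∈ {a, b}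
              have hFdc : maxOn (Pr d) S = c := Finset.mem_singleton.1 h''
              have hFcab : maxOn (Pr c) S ∈ ({a, b} : Finset (Fin n)) := by
                rcases Finset.mem_insert.1 hFcmem with h2 | h2'
                · simp [h2]
                · rcases Finset.mem_insert.1 h2' with h2 | h2''
                  · simp [h2]
                  · exact absurd ⟨Finset.mem_singleton.1 h2'', hFdc⟩ hmut
              have habsABC : ∀ x ∈ ({a, b, c} : Finset (Fin n)),
                  ptr Pr S x ∈ ({a, b, c} : Finset (Fin n)) := by
                intro x hx
                rcases Finset.mem_insert.1 hx with rfl | hx'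
                · rw [pfa]; simp
                · rcases Finset.mem_insert.1 hx' with rfl | hx''
                  · rw [pfb]; simp
                  · rw [Finset.mem_singleton.1 hx'', pfc]
                    rcases Finset.mem_insert.1 hFcab with h2 | h2
                    · simp [h2]
                    · simp [Finset.mem_singleton.1 h2]
              exact not_isPer_absorb habsABC (by rw [pfd, hFdc]; simp)
                (by simp [Ne.symm had, Ne.symm hbd, Ne.symm hcd])
        have hcore : core Pr S = {a, b} := by
          apply core_eq_of hSTO hX
          · intro z hz; simp only [hSdef]
            rcases Finset.mem_insert.1 hz with rfl | hz'
            · simp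
            · rw [Finset.mem_singleton.1 hz']; simp
          · intro i hi
            rcases Finset.mem_insert.1 hi with rfl | hi'
            · exact isPer2 pfa pfb
            · rw [Finset.mem_singleton.1 hi']
              exact isPer2 pfb pfa
          · intro i hiS hiC
            rcases mem4 hiS with rfl | rfl | rfl | rfl
            · exact absurd (by simp) hiC
            · exact absurd (by simp) hiC
            · exact hcnper
            · exact hdnper
        have hrest : S \ core Pr S = {c, d} := by
          rw [hcore]
          ext z
          simp only [hSdef, Finset.mem_sdiff, Finset.mem_insert, Finset.mem_singleton]
          constructor
          · rintro ⟨rfl | rfl | rfl | rfl, hz⟩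
            · exact absurd (Or.inl rfl) hz
            · exact absurd (Or.inr rfl) hz
            · exact Or.inl rfl
            · exact Or.inr rfl
          · rintro (rfl | rfl)
            · refine ⟨Or.inr (Or.inr (Or.inl rfl)), ?_⟩
              push_neg
              exact ⟨Ne.symm hac, Ne.symm hbc⟩
            · refine ⟨Or.inr (Or.inr (Or.inr rfl)), ?_⟩
              push_neg
              exact ⟨Ne.symm had, Ne.symm hbd⟩
        have hcnotc : c ∉ core Pr S := by rw [hcore]; simp [Ne.symm hac, Ne.symm hbc]
        rw [ttcA_rest hX hcnotc, hrest]
        exact ttc_pair hSTO hcd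

end MARKET4B


end TTCdev


namespace TTCdev

variable {n : ℕ} [NeZero n]

lemma ttc_inj {Pr : Fin n → PrefRel n} (hSTO : ∀ i, IsStrictTotalOrder (Fin n) (Pr i))
    (X : Finset (Fin n)) : Function.Injective (ttcA Pr X) := by
  intro p q h
  by_cases hp : p ∈ X <;> by_cases hq : q ∈ X
  · exact ttc_injOn hSTO X p hp q hq h
  · exfalso
    rw [ttc_notmem X q hq] at h
    exact hq (h ▸ ttc_mem hSTO X p hp)
  · exfalso
    rw [ttc_notmem X p hp] at h
    exact hp (h.symm ▸ ttc_mem hSTO X q hq)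
  · rw [ttc_notmem X p hp, ttc_notmem X q hq] at h
    exact h

def cyc3 (a b c : Fin n) : Fin n → Fin n := fun i =>
  if i = a then b else if i = b then c else if i = c then a else i

def cyc4 (a b c d : Fin n) : Fin n → Fin n := fun i =>
  if i = a then b else if i = b then c else if i = c then d else if i = d then a else i

lemma cyc3_a {a b c : Fin n} : cyc3 a b c a = b := by simp [cyc3]

lemma cyc3_b {a b c : Fin n} (hab : a ≠ b) : cyc3 a b c b = c := by
  simp [cyc3, Ne.symm hab]

lemma cyc3_c {a b c : Fin n} (hac : a ≠ c) (hbc : b ≠ c) : cyc3 a b c c = a := by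
  simp [cyc3, Ne.symm hac, Ne.symm hbc]

lemma cyc3_other {a b c x : Fin n} (hxa : x ≠ a) (hxb : x ≠ b) (hxc : x ≠ c) :
    cyc3 a b c x = x := by simp [cyc3, hxa, hxb, hxc]

lemma cyc4_a {a b c d : Fin n} : cyc4 a b c d a = b := by simp [cyc4]

lemma cyc4_b {a b c d : Fin n} (hab : a ≠ b) : cyc4 a b c d b = c := by
  simp [cyc4, Ne.symm hab]

lemma cyc4_c {a b c d : Fin n} (hac : a ≠ c) (hbc : b ≠ c) : cyc4 a b c d c = d := by
  simp [cyc4, Ne.symm hac, Ne.symm hbc]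

lemma cyc4_d {a b c d : Fin n} (had : a ≠ d) (hbd : b ≠ d) (hcd : c ≠ d) :
    cyc4 a b c d d = a := by simp [cyc4, Ne.symm had, Ne.symm hbd, Ne.symm hcd]

lemma cyc4_other {a b c d x : Fin n} (hxa : x ≠ a) (hxb : x ≠ b) (hxc : x ≠ c) (hxd : x ≠ d) :
    cyc4 a b c d x = x := by simp [cyc4, hxa, hxb, hxc, hxd]

lemma cyc3_inj {a b c : Fin n} (hab : a ≠ b) (hac : a ≠ c) (hbc : b ≠ c) :
    Function.Injective (cyc3 a b c) := by
  intro x y hxy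
  unfold cyc3 at hxy
  split_ifs at hxy <;> simp_all

lemma cyc4_inj {a b c d : Fin n} (hab : a ≠ b) (hac : a ≠ c) (had : a ≠ d)
    (hbc : b ≠ c) (hbd : b ≠ d) (hcd : c ≠ d) :
    Function.Injective (cyc4 a b c d) := by
  intro x y hxy
  unfold cyc4 at hxy
  split_ifs at hxy <;> simp_all

/-- The exception condition for the 3-object inner market. -/
def E3 (Pr : Fin n → PrefRel n) (S : Finset (Fin n)) (a b c : Fin n) : Prop :=
  maxOn (Pr a) S = b ∧ maxOn (Pr b) S = a ∧ maxOn (Pr b) (S.erase a) = c ∧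
    maxOn (Pr c) {a, c} = a

/-- The 3-object inner mechanism. -/
def psi3 (S : Finset (Fin n)) (a b c : Fin n) (Pr : Fin n → PrefRel n) : Fin n → Fin n :=
  if E3 Pr S a b c then cyc3 a b c else ttcA Pr S

section PSI3

variable {Pr : Fin n → PrefRel n} {S : Finset (Fin n)} {a b c : Fin n}

lemma psi3_pos (hE : E3 Pr S a b c) : psi3 S a b c Pr = cyc3 a b c := if_pos hE

lemma psi3_neg (hE : ¬ E3 Pr S a b c) : psi3 S a b c Pr = ttcA Pr S := if_neg hE

lemma psi3_off (hS : S = {a, b, c}) {x : Fin n} (hx : x ∉ S) :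
    psi3 S a b c Pr x = x := by
  have h1 : x ≠ a := by rintro rfl; exact hx (by simp [hS])
  have h2 : x ≠ b := by rintro rfl; exact hx (by simp [hS])
  have h3 : x ≠ c := by rintro rfl; exact hx (by simp [hS])
  by_cases hE : E3 Pr S a b c
  · rw [psi3_pos hE]; exact cyc3_other h1 h2 h3
  · rw [psi3_neg hE]; exact ttc_notmem S x hx

lemma psi3_mem (hSTO : ∀ i, IsStrictTotalOrder (Fin n) (Pr i))
    (hab : a ≠ b) (hac : a ≠ c) (hbc : b ≠ c) (hS : S = {a, b, c})
    {x : Fin n} (hx : x ∈ S) : psi3 S a b c Pr x ∈ S := by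
  by_cases hE : E3 Pr S a b c
  · rw [psi3_pos hE]
    by_cases h1 : x = a
    · subst h1; rw [cyc3_a]; simp [hS]
    · by_cases h2 : x = b
      · subst h2; rw [cyc3_b hab]; simp [hS]
      · by_cases h3 : x = c
        · subst h3; rw [cyc3_c hac hbc]; simp [hS]
        · rw [cyc3_other h1 h2 h3]; exact hx
  · rw [psi3_neg hE]; exact ttc_mem hSTO S x hx

lemma psi3_inj (hSTO : ∀ i, IsStrictTotalOrder (Fin n) (Pr i))
    (hab : a ≠ b) (hac : a ≠ c) (hbc : b ≠ c) :
    Function.Injective (psi3 S a b c Pr) := by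
  by_cases hE : E3 Pr S a b c
  · rw [psi3_pos hE]; exact cyc3_inj hab hac hbc
  · rw [psi3_neg hE]; exact ttc_inj hSTO S

lemma psi3_IR (hSTO : ∀ i, IsStrictTotalOrder (Fin n) (Pr i))
    (hab : a ≠ b) (hac : a ≠ c) (hbc : b ≠ c) (hS : S = {a, b, c}) :
    ∀ i ∈ S, psi3 S a b c Pr i = i ∨ Pr i (psi3 S a b c Pr i) i := by
  intro i hi
  by_cases hE : E3 Pr S a b c
  · rw [psi3_pos hE]
    obtain ⟨hχa, hχb, ht, hcc⟩ := hE
    rw [hS] at hi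
    rcases (by simpa using hi : i = a ∨ i = b ∨ i = c) with h | h | h
    · subst h
      rw [cyc3_a]
      exact Or.inr (maxOn_beats (hSTO i) hχa (by simp [hS]) hab)
    · subst h
      rw [cyc3_b hab]
      refine Or.inr (maxOn_beats (hSTO i) ht ?_ hbc)
      rw [hS]
      exact Finset.mem_erase.2 ⟨Ne.symm hab, by simp⟩
    · subst h
      rw [cyc3_c hac hbc]
      exact Or.inr (maxOn_pair_left (hSTO i) hac hcc)
  · rw [psi3_neg hE]
    exact ttc_IR hSTO S i hi

lemma psi3_PE (hSTO : ∀ i, IsStrictTotalOrder (Fin n) (Pr i))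
    (hab : a ≠ b) (hac : a ≠ c) (hbc : b ≠ c) (hS : S = {a, b, c}) :
    ∀ y : Fin n → Fin n,
    (∀ p ∈ S, ∀ q ∈ S, y p = y q → p = q) → (∀ i ∈ S, y i ∈ S) →
    (∀ i ∈ S, y i = psi3 S a b c Pr i ∨ Pr i (y i) (psi3 S a b c Pr i)) →
    ∀ i ∈ S, y i = psi3 S a b c Pr i := by
  intro y hinj hmaps hdom
  by_cases hE : E3 Pr S a b c
  · rw [psi3_pos hE] at hdom ⊢
    obtain ⟨hχa, hχb, ht, hcc⟩ := hE
    have haS : a ∈ S := by simp [hS]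
    have hbS : b ∈ S := by simp [hS]
    have hcS : c ∈ S := by simp [hS]
    have hya : y a = b := by
      rcases hdom a haS with h | h
      · rw [h, cyc3_a]
      · rw [cyc3_a] at h
        rcases eq_or_ne (y a) b with he | hne
        · exact he
        · exact absurd h (fun hh => sto_asymm (hSTO a)
            (maxOn_beats (hSTO a) hχa (hmaps a haS) hne) hh)
    have hyb : y b = c := by
      rcases hdom b hbS with h | h
      · rwa [cyc3_b hab] at h
      · rw [cyc3_b hab] at h
        rcases eq_or_ne (y b) c with he | hne
        · exact he
        · exfalso
          have hybS : y b ∈ S := hmaps b hbS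
          rcases eq_or_ne (y b) a with hea | hnea
          · have hycS : y c ∈ S := hmaps c hcS
            have hyc_ne_b : y c ≠ b := fun h' => hac (hinj a haS c hcS (hya.trans h'.symm))
            have hyc_ne_a : y c ≠ a := fun h' => hbc (hinj b hbS c hcS (hea.trans h'.symm))
            have hycc : y c = c := by
              rw [hS] at hycS
              rcases (by simpa using hycS : y c = a ∨ y c = b ∨ y c = c) with h' | h' | h'
              · exact absurd h' hyc_ne_a
              · exact absurd h' hyc_ne_b
              · exact h'
            rcases hdom c hcS with h' | h'
            · rw [cyc3_c hac hbc] at h'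
              exact hyc_ne_a (hycc ▸ h')
            · rw [cyc3_c hac hbc, hycc] at h'
              exact sto_asymm (hSTO c) (maxOn_pair_left (hSTO c) hac hcc) h'
          · have hyb_erase : y b ∈ S.erase a := Finset.mem_erase.2 ⟨hnea, hybS⟩
            exact sto_asymm (hSTO b) (maxOn_beats (hSTO b) ht hyb_erase hne) h
    have hyc : y c = a := by
      have hycS : y c ∈ S := hmaps c hcS
      have h1 : y c ≠ b := fun h => hac (hinj a haS c hcS (hya.trans h.symm))
      have h2 : y c ≠ c := fun h => hbc (hinj b hbS c hcS (hyb.trans h.symm))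
      rw [hS] at hycS
      rcases (by simpa using hycS : y c = a ∨ y c = b ∨ y c = c) with h | h | h
      · exact h
      · exact absurd h h1
      · exact absurd h h2
    intro i hi
    rw [hS] at hi
    rcases (by simpa using hi : i = a ∨ i = b ∨ i = c) with h | h | h
    · subst h; rw [cyc3_a]; exact hya
    · subst h; rw [cyc3_b hab]; exact hyb
    · subst h; rw [cyc3_c hac hbc]; exact hyc
  · rw [psi3_neg hE] at hdom ⊢
    exact fun i hi => ttc_PE hSTO S y hinj hmaps hdom i hi

end PSI3

end TTCdev


namespace TTCdev

variable {n : ℕ} [NeZero n]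

section PSI3SP

variable {Pr Q : Fin n → PrefRel n} {S : Finset (Fin n)} {a b c : Fin n}

lemma erase3_mem (hab : a ≠ b) (hac : a ≠ c) (hS : S = {a, b, c}) :
    ∀ x ∈ S.erase a, x = b ∨ x = c := by
  intro x hx
  obtain ⟨hxa, hxS⟩ := Finset.mem_erase.1 hx
  rw [hS] at hxS
  rcases (by simpa using hxS : x = a ∨ x = b ∨ x = c) with h | h | h
  · exact absurd h hxa
  · exact Or.inl h
  · exact Or.inr h

lemma psi3_SP (hSTO : ∀ j, IsStrictTotalOrder (Fin n) (Pr j))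
    (hQSTO : ∀ j, IsStrictTotalOrder (Fin n) (Q j))
    (hab : a ≠ b) (hac : a ≠ c) (hbc : b ≠ c) (hS : S = {a, b, c})
    {i : Fin n} (hi : i ∈ S) (hagree : ∀ j, j ≠ i → Q j = Pr j)
    (hgapP : maxOn (Pr b) S = a → maxOn (Pr b) (S.erase a) ≠ b)
    (hgapQ : maxOn (Q b) S = a → maxOn (Q b) (S.erase a) ≠ b) :
    psi3 S a b c Pr i = psi3 S a b c Q i ∨
      Pr i (psi3 S a b c Pr i) (psi3 S a b c Q i) := by
  have haS : a ∈ S := by simp [hS]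
  have hbS : b ∈ S := by simp [hS]
  have hcS : c ∈ S := by simp [hS]
  have hberase : b ∈ S.erase a := Finset.mem_erase.2 ⟨Ne.symm hab, hbS⟩
  have hd : ∀ x ∈ S.erase a, x = b ∨ x = c := erase3_mem hab hac hS
  rw [hS] at hi
  rcases (by simpa using hi : i = a ∨ i = b ∨ i = c) with h | h | h
  · -- deviator is a (note: after subst, `i` replaces `a`)
    subst h
    have hQb : Q b = Pr b := hagree b (Ne.symm hab)
    have hQc : Q c = Pr c := hagree c (Ne.symm hac)
    by_cases hoth : maxOn (Pr b) S = i ∧ maxOn (Pr b) (S.erase i) = c ∧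
        maxOn (Pr c) {i, c} = i
    · by_cases hχa : maxOn (Pr i) S = b
      · have hEP : E3 Pr S i b c := ⟨hχa, hoth.1, hoth.2.1, hoth.2.2⟩
        rw [psi3_pos hEP, cyc3_a]
        have hvq : psi3 S i b c Q i ∈ S := psi3_mem hQSTO hab hac hbc hS haS
        rcases eq_or_ne b (psi3 S i b c Q i) with he | hne
        · exact Or.inl he
        · exact Or.inr (maxOn_beats (hSTO i) hχa hvq (Ne.symm hne))
      · have hEP : ¬ E3 Pr S i b c := fun hE => hχa hE.1
        rw [psi3_neg hEP]
        have hFc : maxOn (Pr c) S ≠ c :=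
          maxOn_ne_of_beats (hSTO c) haS hac (maxOn_pair_left (hSTO c) hac hoth.2.2)
        have hvp : ttcA Pr S i = maxOn (Pr i) S := val_a3 hSTO hab hac hbc hS hoth.1 hFc
        by_cases hEQ : E3 Q S i b c
        · rw [psi3_pos hEQ, cyc3_a, hvp]
          exact Or.inr (maxOn_beats (hSTO i) rfl hbS (fun h => hχa h.symm))
        · rw [psi3_neg hEQ]
          exact ttc_SP hSTO hQSTO hagree S haS
    · have h1 : ¬ E3 Pr S i b c := fun hE => hoth ⟨hE.2.1, hE.2.2.1, hE.2.2.2⟩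
      have h2 : ¬ E3 Q S i b c := fun hE => hoth (by
        rw [← hQb, ← hQc]
        exact ⟨hE.2.1, hE.2.2.1, hE.2.2.2⟩)
      rw [psi3_neg h1, psi3_neg h2]
      exact ttc_SP hSTO hQSTO hagree S haS
  · -- deviator is b (after subst, `i` replaces `b`)
    subst h
    have hQa : Q a = Pr a := hagree a hab
    have hQc : Q c = Pr c := hagree c (Ne.symm hbc)
    by_cases hoth : maxOn (Pr a) S = i ∧ maxOn (Pr c) {a, c} = a
    · have hFc : maxOn (Pr c) S ≠ c :=
        maxOn_ne_of_beats (hSTO c) haS hac (maxOn_pair_left (hSTO c) hac hoth.2)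
      have hFcQ : maxOn (Q c) S ≠ c := by rw [hQc]; exact hFc
      by_cases hχb : maxOn (Pr i) S = a
      · have htP : maxOn (Pr i) (S.erase a) = c := by
          rcases hd _ (maxOn_mem (hSTO i) ⟨i, hberase⟩) with h' | h'
          · exact absurd h' (hgapP hχb)
          · exact h'
        have hEP : E3 Pr S a i c := ⟨hoth.1, hχb, htP, hoth.2⟩
        rw [psi3_pos hEP, cyc3_b hab]
        by_cases hEQ : E3 Q S a i c
        · rw [psi3_pos hEQ, cyc3_b hab]
          exact Or.inl rfl
        · have hχbQ : maxOn (Q i) S ≠ a := by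
            intro hQχ
            apply hEQ
            refine ⟨by rw [hQa]; exact hoth.1, hQχ, ?_, by rw [hQc]; exact hoth.2⟩
            rcases hd _ (maxOn_mem (hQSTO i) ⟨i, hberase⟩) with h' | h'
            · exact absurd h' (hgapQ hQχ)
            · exact h'
          rw [psi3_neg hEQ]
          have hvq : ttcA Q S i = maxOn (Q i) S :=
            val_b3 hQSTO hab hac hbc hS (by rw [hQa]; exact hoth.1) hFcQ
          rw [hvq]
          have hβS : maxOn (Q i) S ∈ S := maxOn_mem (hQSTO i) ⟨i, hbS⟩
          rcases eq_or_ne (maxOn (Q i) S) c with he | hne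
          · exact Or.inl he.symm
          · refine Or.inr (maxOn_beats (hSTO i) htP ?_ hne)
            exact Finset.mem_erase.2 ⟨hχbQ, hβS⟩
      · have hEP : ¬ E3 Pr S a i c := fun hE => hχb hE.2.1
        rw [psi3_neg hEP]
        have hvp : ttcA Pr S i = maxOn (Pr i) S :=
          val_b3 hSTO hab hac hbc hS hoth.1 hFc
        by_cases hEQ : E3 Q S a i c
        · rw [psi3_pos hEQ, cyc3_b hab, hvp]
          rcases eq_or_ne (maxOn (Pr i) S) c with he | hne
          · exact Or.inl he
          · exact Or.inr (maxOn_beats (hSTO i) rfl hcS (Ne.symm hne))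
        · rw [psi3_neg hEQ]
          exact ttc_SP hSTO hQSTO hagree S hbS
    · have h1 : ¬ E3 Pr S a i c := fun hE => hoth ⟨hE.1, hE.2.2.2⟩
      have h2 : ¬ E3 Q S a i c := fun hE => hoth (by
        rw [← hQa, ← hQc]
        exact ⟨hE.1, hE.2.2.2⟩)
      rw [psi3_neg h1, psi3_neg h2]
      exact ttc_SP hSTO hQSTO hagree S hbS
  · -- deviator is c (after subst, `i` replaces `c`)
    subst h
    have hQa : Q a = Pr a := hagree a hac
    have hQb : Q b = Pr b := hagree b hbc
    by_cases hoth : maxOn (Pr a) S = b ∧ maxOn (Pr b) S = a ∧ maxOn (Pr b) (S.erase a) = i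
    · by_cases hcc : maxOn (Pr i) {a, i} = a
      · have hEP : E3 Pr S a b i := ⟨hoth.1, hoth.2.1, hoth.2.2, hcc⟩
        rw [psi3_pos hEP, cyc3_c hac hbc]
        by_cases hEQ : E3 Q S a b i
        · rw [psi3_pos hEQ, cyc3_c hac hbc]
          exact Or.inl rfl
        · have hccQ : ¬ maxOn (Q i) {a, i} = a := by
            intro hQcc
            exact hEQ ⟨by rw [hQa]; exact hoth.1, by rw [hQb]; exact hoth.2.1,
              by rw [hQb]; exact hoth.2.2, hQcc⟩
          rw [psi3_neg hEQ]
          have hvq : ttcA Q S i = i :=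
            val_c3 hQSTO hab hac hbc hS (by rw [hQa]; exact hoth.1)
              (by rw [hQb]; exact hoth.2.1)
          rw [hvq]
          exact Or.inr (maxOn_pair_left (hSTO i) hac hcc)
      · have hEP : ¬ E3 Pr S a b i := fun hE => hcc hE.2.2.2
        rw [psi3_neg hEP]
        have hvp : ttcA Pr S i = i :=
          val_c3 hSTO hab hac hbc hS hoth.1 hoth.2.1
        by_cases hEQ : E3 Q S a b i
        · rw [psi3_pos hEQ, cyc3_c hac hbc, hvp]
          have hpair : maxOn (Pr i) {a, i} = i := by
            rcases maxOn_pair_mem (hSTO i) a i with h' | h'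
            · exact absurd h' hcc
            · exact h'
          exact Or.inr (maxOn_beats (hSTO i) hpair (by simp) hac)
        · rw [psi3_neg hEQ]
          exact ttc_SP hSTO hQSTO hagree S hcS
    · have h1 : ¬ E3 Pr S a b i := fun hE => hoth ⟨hE.1, hE.2.1, hE.2.2.1⟩
      have h2 : ¬ E3 Q S a b i := fun hE => hoth (by
        rw [← hQa, ← hQb]
        exact ⟨hE.1, hE.2.1, hE.2.2.1⟩)
      rw [psi3_neg h1, psi3_neg h2]
      exact ttc_SP hSTO hQSTO hagree S hcS

end PSI3SP

end TTCdev


namespace TTCdev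

variable {n : ℕ} [NeZero n]

/-- Exception condition for the 4-object inner market. -/
def E4 (Pr : Fin n → PrefRel n) (S : Finset (Fin n)) (a b c d : Fin n) : Prop :=
  maxOn (Pr a) S = b ∧ maxOn (Pr b) S = a ∧
  (maxOn (Pr b) (S.erase a) = c ∨ maxOn (Pr b) (S.erase a) = d) ∧
  maxOn (Pr c) {a, c, d} ≠ c ∧ maxOn (Pr d) {a, c, d} ≠ d ∧
  ¬ (maxOn (Pr c) {a, c, d} = d ∧ maxOn (Pr d) {a, c, d} = c)

def alloc4 (Pr : Fin n → PrefRel n) (S : Finset (Fin n)) (a b c d : Fin n) :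
    Fin n → Fin n :=
  if maxOn (Pr b) (S.erase a) = c then
    (if maxOn (Pr c) {a, c, d} = a then cyc3 a b c else cyc4 a b c d)
  else
    (if maxOn (Pr d) {a, c, d} = a then cyc3 a b d else cyc4 a b d c)

/-- The 4-object inner mechanism. -/
def psi4 (S : Finset (Fin n)) (a b c d : Fin n) (Pr : Fin n → PrefRel n) : Fin n → Fin n :=
  if E4 Pr S a b c d then alloc4 Pr S a b c d else ttcA Pr S

section PSI4

variable {Pr Q : Fin n → PrefRel n} {S : Finset (Fin n)} {a b c d : Fin n}

lemma psi4_pos (hE : E4 Pr S a b c d) : psi4 S a b c d Pr = alloc4 Pr S a b c d := if_pos hE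

lemma psi4_neg (hE : ¬ E4 Pr S a b c d) : psi4 S a b c d Pr = ttcA Pr S := if_neg hE

lemma memT {x : Fin n} (hx : x ∈ ({a, c, d} : Finset (Fin n))) :
    x = a ∨ x = c ∨ x = d := by simpa using hx

lemma pairTT : ({a, c, d} : Finset (Fin n)) = {a, d, c} := by
  rw [Finset.pair_comm c d]

lemma E4_comm (hcd : c ≠ d) : E4 Pr S a b c d ↔ E4 Pr S a b d c := by
  unfold E4
  rw [pairTT]
  constructor
  · rintro ⟨h1, h2, h3, h4, h5, h6⟩
    exact ⟨h1, h2, h3.symm, h5, h4, fun ⟨x, y⟩ => h6 ⟨y, x⟩⟩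
  · rintro ⟨h1, h2, h3, h4, h5, h6⟩
    exact ⟨h1, h2, h3.symm, h5, h4, fun ⟨x, y⟩ => h6 ⟨y, x⟩⟩

lemma psi4_comm (hcd : c ≠ d) : psi4 S a b c d Pr = psi4 S a b d c Pr := by
  by_cases hE : E4 Pr S a b c d
  · rw [psi4_pos hE, psi4_pos ((E4_comm hcd).1 hE)]
    obtain ⟨_, _, htor, _, _, _⟩ := hE
    unfold alloc4
    rcases htor with h | h
    · rw [if_pos h, if_neg (fun h' => hcd (h.symm.trans h')), pairTT]
    · rw [if_pos h, if_neg (fun h' => hcd (h'.symm.trans h)), pairTT]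
  · rw [psi4_neg hE, psi4_neg (fun h => hE ((E4_comm hcd).2 h))]

lemma alloc4_cases :
    alloc4 Pr S a b c d = cyc3 a b c ∨ alloc4 Pr S a b c d = cyc4 a b c d ∨
    alloc4 Pr S a b c d = cyc3 a b d ∨ alloc4 Pr S a b c d = cyc4 a b d c := by
  unfold alloc4
  split
  · split
    · exact Or.inl rfl
    · exact Or.inr (Or.inl rfl)
  · split
    · exact Or.inr (Or.inr (Or.inl rfl))
    · exact Or.inr (Or.inr (Or.inr rfl))

lemma psi4_off (hS : S = {a, b, c, d}) {x : Fin n} (hx : x ∉ S) :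
    psi4 S a b c d Pr x = x := by
  have h1 : x ≠ a := by rintro rfl; exact hx (by simp [hS])
  have h2 : x ≠ b := by rintro rfl; exact hx (by simp [hS])
  have h3 : x ≠ c := by rintro rfl; exact hx (by simp [hS])
  have h4 : x ≠ d := by rintro rfl; exact hx (by simp [hS])
  by_cases hE : E4 Pr S a b c d
  · rw [psi4_pos hE]
    rcases alloc4_cases (Pr := Pr) (S := S) (a := a) (b := b) (c := c) (d := d)
      with h | h | h | h <;> rw [h]
    · exact cyc3_other h1 h2 h3
    · exact cyc4_other h1 h2 h3 h4
    · exact cyc3_other h1 h2 h4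
    · exact cyc4_other h1 h2 h4 h3
  · rw [psi4_neg hE]; exact ttc_notmem S x hx

lemma cyc3_mem_vals {x : Fin n} : cyc3 a b c x = x ∨ cyc3 a b c x = a ∨ cyc3 a b c x = b ∨
    cyc3 a b c x = c := by
  unfold cyc3
  split_ifs <;> tauto

lemma cyc4_mem_vals {x : Fin n} : cyc4 a b c d x = x ∨ cyc4 a b c d x = a ∨
    cyc4 a b c d x = b ∨ cyc4 a b c d x = c ∨ cyc4 a b c d x = d := by
  unfold cyc4
  split_ifs <;> tauto

lemma psi4_mem (hSTO : ∀ j, IsStrictTotalOrder (Fin n) (Pr j)) (hS : S = {a, b, c, d})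
    {x : Fin n} (hx : x ∈ S) : psi4 S a b c d Pr x ∈ S := by
  by_cases hE : E4 Pr S a b c d
  · rw [psi4_pos hE]
    rcases alloc4_cases (Pr := Pr) (S := S) (a := a) (b := b) (c := c) (d := d)
      with h | h | h | h <;> rw [h]
    · rcases cyc3_mem_vals (a := a) (b := b) (c := c) (x := x) with h' | h' | h' | h' <;>
        rw [h'] <;> simp [hS] <;> exact (by simpa [hS] using hx)
    · rcases cyc4_mem_vals (a := a) (b := b) (c := c) (d := d) (x := x)
        with h' | h' | h' | h' | h' <;> rw [h'] <;> simp [hS] <;>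
        exact (by simpa [hS] using hx)
    · rcases cyc3_mem_vals (a := a) (b := b) (c := d) (x := x) with h' | h' | h' | h' <;>
        rw [h'] <;> simp [hS] <;> exact (by simpa [hS] using hx)
    · rcases cyc4_mem_vals (a := a) (b := b) (c := d) (d := c) (x := x)
        with h' | h' | h' | h' | h' <;> rw [h'] <;> simp [hS] <;>
        exact (by simpa [hS] using hx)
  · rw [psi4_neg hE]; exact ttc_mem hSTO S x hx

lemma psi4_inj (hSTO : ∀ j, IsStrictTotalOrder (Fin n) (Pr j))
    (hab : a ≠ b) (hac : a ≠ c) (had : a ≠ d) (hbc : b ≠ c) (hbd : b ≠ d) (hcd : c ≠ d) :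
    Function.Injective (psi4 S a b c d Pr) := by
  by_cases hE : E4 Pr S a b c d
  · rw [psi4_pos hE]
    rcases alloc4_cases (Pr := Pr) (S := S) (a := a) (b := b) (c := c) (d := d)
      with h | h | h | h <;> rw [h]
    · exact cyc3_inj hab hac hbc
    · exact cyc4_inj hab hac had hbc hbd hcd
    · exact cyc3_inj hab had hbd
    · exact cyc4_inj hab had hac hbd hbc (Ne.symm hcd)
  · rw [psi4_neg hE]; exact ttc_inj hSTO S

end PSI4

end TTCdev


namespace TTCdev

variable {n : ℕ} [NeZero n]

section PSI4B

variable {Pr Q : Fin n → PrefRel n} {S : Finset (Fin n)} {a b c d : Fin n}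

lemma pairS : ({a, b, c, d} : Finset (Fin n)) = {a, b, d, c} := by
  rw [Finset.pair_comm c d]

lemma theta_d_of (hSTO : ∀ j, IsStrictTotalOrder (Fin n) (Pr j))
    (hθc : maxOn (Pr c) {a, c, d} ≠ c) (hθca : maxOn (Pr c) {a, c, d} ≠ a) :
    maxOn (Pr c) {a, c, d} = d := by
  have hm : maxOn (Pr c) {a, c, d} ∈ ({a, c, d} : Finset (Fin n)) :=
    maxOn_mem (hSTO c) ⟨a, by simp⟩
  rcases memT hm with h | h | h
  · exact absurd h hθca
  · exact absurd h hθc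
  · exact h

lemma theta_a_of (hSTO : ∀ j, IsStrictTotalOrder (Fin n) (Pr j))
    (hθd : maxOn (Pr d) {a, c, d} ≠ d) (hθdc : maxOn (Pr d) {a, c, d} ≠ c) :
    maxOn (Pr d) {a, c, d} = a := by
  have hm : maxOn (Pr d) {a, c, d} ∈ ({a, c, d} : Finset (Fin n)) :=
    maxOn_mem (hSTO d) ⟨a, by simp⟩
  rcases memT hm with h | h | h
  · exact h
  · exact absurd h hθdc
  · exact absurd h hθd

lemma psi4_IR_core (hSTO : ∀ j, IsStrictTotalOrder (Fin n) (Pr j))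
    (hab : a ≠ b) (hac : a ≠ c) (had : a ≠ d) (hbc : b ≠ c) (hbd : b ≠ d) (hcd : c ≠ d)
    (hS : S = {a, b, c, d}) (hE : E4 Pr S a b c d)
    (htc : maxOn (Pr b) (S.erase a) = c) :
    ∀ i ∈ S, psi4 S a b c d Pr i = i ∨ Pr i (psi4 S a b c d Pr i) i := by
  intro i hi
  rw [psi4_pos hE]
  obtain ⟨hχa, hχb, htor, hθc, hθd, hmut⟩ := hE
  have hberase : b ∈ S.erase a := Finset.mem_erase.2 ⟨Ne.symm hab, by simp [hS]⟩
  unfold alloc4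
  rw [if_pos htc]
  rw [hS] at hi
  by_cases hθca : maxOn (Pr c) {a, c, d} = a
  · rw [if_pos hθca]
    rcases (by simpa using hi : i = a ∨ i = b ∨ i = c ∨ i = d) with h | h | h | h
    · subst h; rw [cyc3_a]
      exact Or.inr (maxOn_beats (hSTO i) hχa (by simp [hS]) hab)
    · subst h; rw [cyc3_b hab]
      exact Or.inr (maxOn_beats (hSTO i) htc hberase hbc)
    · subst h; rw [cyc3_c hac hbc]
      exact Or.inr (maxOn_beats (hSTO i) hθca (by simp) (Ne.symm hac))
    · subst h; rw [cyc3_other (Ne.symm had) (Ne.symm hbd) (Ne.symm hcd)]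
      exact Or.inl rfl
  · rw [if_neg hθca]
    have hθcd : maxOn (Pr c) {a, c, d} = d := theta_d_of hSTO hθc hθca
    have hθda : maxOn (Pr d) {a, c, d} = a :=
      theta_a_of hSTO hθd (fun h => hmut ⟨hθcd, h⟩)
    rcases (by simpa using hi : i = a ∨ i = b ∨ i = c ∨ i = d) with h | h | h | h
    · subst h; rw [cyc4_a]
      exact Or.inr (maxOn_beats (hSTO i) hχa (by simp [hS]) hab)
    · subst h; rw [cyc4_b hab]
      exact Or.inr (maxOn_beats (hSTO i) htc hberase hbc)
    · subst h; rw [cyc4_c hac hbc]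
      exact Or.inr (maxOn_beats (hSTO i) hθcd (by simp) hcd)
    · subst h; rw [cyc4_d had hbd hcd]
      exact Or.inr (maxOn_beats (hSTO i) hθda (by simp) (Ne.symm had))

lemma psi4_IR (hSTO : ∀ j, IsStrictTotalOrder (Fin n) (Pr j))
    (hab : a ≠ b) (hac : a ≠ c) (had : a ≠ d) (hbc : b ≠ c) (hbd : b ≠ d) (hcd : c ≠ d)
    (hS : S = {a, b, c, d}) :
    ∀ i ∈ S, psi4 S a b c d Pr i = i ∨ Pr i (psi4 S a b c d Pr i) i := by
  intro i hi
  by_cases hE : E4 Pr S a b c d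
  · rcases hE.2.2.1 with htc | htd
    · exact psi4_IR_core hSTO hab hac had hbc hbd hcd hS hE htc i hi
    · rw [psi4_comm hcd]
      exact psi4_IR_core hSTO hab had hac hbd hbc (Ne.symm hcd)
        (hS.trans pairS) ((E4_comm hcd).1 hE) htd i hi
  · rw [psi4_neg hE]
    exact ttc_IR hSTO S i hi

lemma psi4_PE_core (hSTO : ∀ j, IsStrictTotalOrder (Fin n) (Pr j))
    (hab : a ≠ b) (hac : a ≠ c) (had : a ≠ d) (hbc : b ≠ c) (hbd : b ≠ d) (hcd : c ≠ d)
    (hS : S = {a, b, c, d}) (hE : E4 Pr S a b c d)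
    (htc : maxOn (Pr b) (S.erase a) = c) (y : Fin n → Fin n)
    (hinj : ∀ p ∈ S, ∀ q ∈ S, y p = y q → p = q) (hmaps : ∀ i ∈ S, y i ∈ S)
    (hdom : ∀ i ∈ S, y i = psi4 S a b c d Pr i ∨ Pr i (y i) (psi4 S a b c d Pr i)) :
    ∀ i ∈ S, y i = psi4 S a b c d Pr i := by
  rw [psi4_pos hE] at hdom ⊢
  obtain ⟨hχa, hχb, htor, hθc, hθd, hmut⟩ := hE
  have haS : a ∈ S := by simp [hS]
  have hbS : b ∈ S := by simp [hS]
  have hcS : c ∈ S := by simp [hS]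
  have hdS : d ∈ S := by simp [hS]
  have hberase : b ∈ S.erase a := Finset.mem_erase.2 ⟨Ne.symm hab, hbS⟩
  have hya : y a = b := by
    rcases hdom a haS with h | h
    · rw [h]
      unfold alloc4
      rw [if_pos htc]
      split
      · exact cyc3_a
      · exact cyc4_a
    · have hval : alloc4 Pr S a b c d a = b := by
        unfold alloc4
        rw [if_pos htc]
        split
        · exact cyc3_a
        · exact cyc4_a
      rw [hval] at h
      rcases eq_or_ne (y a) b with he | hne
      · exact he
      · exact absurd h (fun hh => sto_asymm (hSTO a)
          (maxOn_beats (hSTO a) hχa (hmaps a haS) hne) hh)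
  unfold alloc4 at hdom ⊢
  rw [if_pos htc] at hdom ⊢
  by_cases hθca : maxOn (Pr c) {a, c, d} = a
  · rw [if_pos hθca] at hdom ⊢
    -- allocation: a↦b, b↦c, c↦a, d↦d
    have hyb : y b = c := by
      rcases hdom b hbS with h | h
      · rwa [cyc3_b hab] at h
      · rw [cyc3_b hab] at h
        rcases eq_or_ne (y b) c with he | hne
        · exact he
        · exfalso
          have hybS : y b ∈ S := hmaps b hbS
          rcases eq_or_ne (y b) a with hea | hnea
          · -- y b = a forces y c ∈ {c, d}, both beaten by a for c
            have hycS : y c ∈ S := hmaps c hcS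
            have h1 : y c ≠ b := fun h' => hac (hinj a haS c hcS (hya.trans h'.symm))
            have h2 : y c ≠ a := fun h' => hbc (hinj b hbS c hcS (hea.trans h'.symm))
            have hyccd : y c = c ∨ y c = d := by
              rw [hS] at hycS
              rcases (by simpa using hycS : y c = a ∨ y c = b ∨ y c = c ∨ y c = d)
                with h' | h' | h' | h'
              · exact absurd h' h2
              · exact absurd h' h1
              · exact Or.inl h'
              · exact Or.inr h'
            rcases hdom c hcS with h' | h'
            · rw [cyc3_c hac hbc] at h'
              exact h2 h'
            · rw [cyc3_c hac hbc] at h'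
              rcases hyccd with h'' | h'' <;> rw [h''] at h'
              · exact sto_asymm (hSTO c)
                  (maxOn_beats (hSTO c) hθca (by simp) (Ne.symm hac)) h'
              · exact sto_asymm (hSTO c)
                  (maxOn_beats (hSTO c) hθca (by simp) (Ne.symm had)) h'
          · have hyb_erase : y b ∈ S.erase a := Finset.mem_erase.2 ⟨hnea, hybS⟩
            exact sto_asymm (hSTO b) (maxOn_beats (hSTO b) htc hyb_erase hne) h
    have hyc : y c = a := by
      have hycS : y c ∈ S := hmaps c hcS
      have h1 : y c ≠ b := fun h' => hac (hinj a haS c hcS (hya.trans h'.symm))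
      have h2 : y c ≠ c := fun h' => hbc (hinj b hbS c hcS (hyb.trans h'.symm))
      have h3 : y c ≠ d := by
        intro h'
        rcases hdom c hcS with h'' | h''
        · rw [cyc3_c hac hbc] at h''
          exact had (h''.symm.trans h')
        · rw [cyc3_c hac hbc, h'] at h''
          exact sto_asymm (hSTO c)
            (maxOn_beats (hSTO c) hθca (by simp) (Ne.symm had)) h''
      rw [hS] at hycS
      rcases (by simpa using hycS : y c = a ∨ y c = b ∨ y c = c ∨ y c = d)
        with h' | h' | h' | h'
      · exact h'
      · exact absurd h' h1
      · exact absurd h' h2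
      · exact absurd h' h3
    have hyd : y d = d := by
      have hydS : y d ∈ S := hmaps d hdS
      have h1 : y d ≠ b := fun h' => had (hinj a haS d hdS (hya.trans h'.symm))
      have h2 : y d ≠ c := fun h' => hbd (hinj b hbS d hdS (hyb.trans h'.symm))
      have h3 : y d ≠ a := fun h' => hcd (hinj c hcS d hdS (hyc.trans h'.symm))
      rw [hS] at hydS
      rcases (by simpa using hydS : y d = a ∨ y d = b ∨ y d = c ∨ y d = d)
        with h' | h' | h' | h'
      · exact absurd h' h3
      · exact absurd h' h1
      · exact absurd h' h2
      · exact h'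
    intro i hi
    rw [hS] at hi
    rcases (by simpa using hi : i = a ∨ i = b ∨ i = c ∨ i = d) with h | h | h | h
    · subst h; rw [cyc3_a]; exact hya
    · subst h; rw [cyc3_b hab]; exact hyb
    · subst h; rw [cyc3_c hac hbc]; exact hyc
    · subst h; rw [cyc3_other (Ne.symm had) (Ne.symm hbd) (Ne.symm hcd)]; exact hyd
  · rw [if_neg hθca] at hdom ⊢
    have hθcd : maxOn (Pr c) {a, c, d} = d := theta_d_of hSTO hθc hθca
    have hθda : maxOn (Pr d) {a, c, d} = a :=
      theta_a_of hSTO hθd (fun h => hmut ⟨hθcd, h⟩)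
    -- allocation: a↦b, b↦c, c↦d, d↦a
    have hyb : y b = c := by
      rcases hdom b hbS with h | h
      · rwa [cyc4_b hab] at h
      · rw [cyc4_b hab] at h
        rcases eq_or_ne (y b) c with he | hne
        · exact he
        · exfalso
          have hybS : y b ∈ S := hmaps b hbS
          rcases eq_or_ne (y b) a with hea | hnea
          · -- y b = a forces y d ∈ {c, d}, both beaten by a for d
            have hydS : y d ∈ S := hmaps d hdS
            have h1 : y d ≠ b := fun h' => had (hinj a haS d hdS (hya.trans h'.symm))
            have h2 : y d ≠ a := fun h' => hbd (hinj b hbS d hdS (hea.trans h'.symm))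
            have hydcd : y d = c ∨ y d = d := by
              rw [hS] at hydS
              rcases (by simpa using hydS : y d = a ∨ y d = b ∨ y d = c ∨ y d = d)
                with h' | h' | h' | h'
              · exact absurd h' h2
              · exact absurd h' h1
              · exact Or.inl h'
              · exact Or.inr h'
            rcases hdom d hdS with h' | h'
            · rw [cyc4_d had hbd hcd] at h'
              exact h2 h'
            · rw [cyc4_d had hbd hcd] at h'
              rcases hydcd with h'' | h'' <;> rw [h''] at h'
              · exact sto_asymm (hSTO d)
                  (maxOn_beats (hSTO d) hθda (by simp) (Ne.symm hac)) h'
              · exact sto_asymm (hSTO d)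
                  (maxOn_beats (hSTO d) hθda (by simp) (Ne.symm had)) h'
          · have hyb_erase : y b ∈ S.erase a := Finset.mem_erase.2 ⟨hnea, hybS⟩
            exact sto_asymm (hSTO b) (maxOn_beats (hSTO b) htc hyb_erase hne) h
    have hyc : y c = d := by
      have hycS : y c ∈ S := hmaps c hcS
      have h1 : y c ≠ b := fun h' => hac (hinj a haS c hcS (hya.trans h'.symm))
      have h2 : y c ≠ c := fun h' => hbc (hinj b hbS c hcS (hyb.trans h'.symm))
      have h3 : y c ≠ a := by
        intro h'
        rcases hdom c hcS with h'' | h''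
        · rw [cyc4_c hac hbc] at h''
          exact had (h'.symm.trans h'')
        · rw [cyc4_c hac hbc, h'] at h''
          exact sto_asymm (hSTO c)
            (maxOn_beats (hSTO c) hθcd (by simp) (Ne.symm had).symm) h''
      rw [hS] at hycS
      rcases (by simpa using hycS : y c = a ∨ y c = b ∨ y c = c ∨ y c = d)
        with h' | h' | h' | h'
      · exact absurd h' h3
      · exact absurd h' h1
      · exact absurd h' h2
      · exact h'
    have hyd : y d = a := by
      have hydS : y d ∈ S := hmaps d hdS
      have h1 : y d ≠ b := fun h' => had (hinj a haS d hdS (hya.trans h'.symm))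
      have h2 : y d ≠ c := fun h' => hbd (hinj b hbS d hdS (hyb.trans h'.symm))
      have h3 : y d ≠ d := fun h' => hcd (hinj c hcS d hdS (hyc.trans h'.symm))
      rw [hS] at hydS
      rcases (by simpa using hydS : y d = a ∨ y d = b ∨ y d = c ∨ y d = d)
        with h' | h' | h' | h'
      · exact h'
      · exact absurd h' h1
      · exact absurd h' h2
      · exact absurd h' h3
    intro i hi
    rw [hS] at hi
    rcases (by simpa using hi : i = a ∨ i = b ∨ i = c ∨ i = d) with h | h | h | h
    · subst h; rw [cyc4_a]; exact hya
    · subst h; rw [cyc4_b hab]; exact hyb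
    · subst h; rw [cyc4_c hac hbc]; exact hyc
    · subst h; rw [cyc4_d had hbd hcd]; exact hyd

lemma psi4_PE (hSTO : ∀ j, IsStrictTotalOrder (Fin n) (Pr j))
    (hab : a ≠ b) (hac : a ≠ c) (had : a ≠ d) (hbc : b ≠ c) (hbd : b ≠ d) (hcd : c ≠ d)
    (hS : S = {a, b, c, d}) :
    ∀ y : Fin n → Fin n,
    (∀ p ∈ S, ∀ q ∈ S, y p = y q → p = q) → (∀ i ∈ S, y i ∈ S) →
    (∀ i ∈ S, y i = psi4 S a b c d Pr i ∨ Pr i (y i) (psi4 S a b c d Pr i)) →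
    ∀ i ∈ S, y i = psi4 S a b c d Pr i := by
  intro y hinj hmaps hdom
  by_cases hE : E4 Pr S a b c d
  · rcases hE.2.2.1 with htc | htd
    · exact psi4_PE_core hSTO hab hac had hbc hbd hcd hS hE htc y hinj hmaps hdom
    · intro i hi
      rw [psi4_comm hcd]
      refine psi4_PE_core hSTO hab had hac hbd hbc (Ne.symm hcd) (hS.trans pairS)
        ((E4_comm hcd).1 hE) htd y hinj hmaps ?_ i hi
      intro j hj
      rw [← psi4_comm hcd]
      exact hdom j hj
  · rw [psi4_neg hE] at hdom ⊢
    exact fun i hi => ttc_PE hSTO S y hinj hmaps hdom i hi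

end PSI4B

end TTCdev


namespace TTCdev

variable {n : ℕ} [NeZero n]

section PSI4SP

variable {Pr Q : Fin n → PrefRel n} {S : Finset (Fin n)} {a b c d : Fin n}

lemma alloc4_a : alloc4 Pr S a b c d a = b := by
  unfold alloc4
  split
  · split
    · exact cyc3_a
    · exact cyc4_a
  · split
    · exact cyc3_a
    · exact cyc4_a

lemma alloc4_b (hab : a ≠ b) (hcd : c ≠ d)
    (htor : maxOn (Pr b) (S.erase a) = c ∨ maxOn (Pr b) (S.erase a) = d) :
    alloc4 Pr S a b c d b = maxOn (Pr b) (S.erase a) := by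
  unfold alloc4
  rcases htor with h | h
  · rw [if_pos h]
    split
    · rw [cyc3_b hab, h]
    · rw [cyc4_b hab, h]
  · rw [if_neg (fun h' => hcd (h'.symm.trans h))]
    split
    · rw [cyc3_b hab, h]
    · rw [cyc4_b hab, h]

lemma FS_ne (hP : IsStrictTotalOrder (Fin n) P) {x w : Fin n} {X T : Finset (Fin n)}
    (hTX : T ⊆ X) (hxT : x ∈ T) (hθ : maxOn P T = w) (hwx : w ≠ x) :
    maxOn P X ≠ x :=
  maxOn_ne_of_beats hP (hTX (hθ ▸ maxOn_mem hP ⟨x, hxT⟩)) hwx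
    (maxOn_beats hP hθ hxT (Ne.symm hwx))

/-- S-level maxOn lands in T implies it equals the T-level maxOn -/
lemma F_to_theta (hP : IsStrictTotalOrder (Fin n) P) {w : Fin n} {X T : Finset (Fin n)}
    (hTX : T ⊆ X) (hX : X.Nonempty) (hwT : w ∈ T) (hF : maxOn P X = w) :
    maxOn P T = w := by
  rw [← hF]
  exact maxOn_congr hP hTX hX (hF ▸ hwT)

lemma psi4_SP_a (hSTO : ∀ j, IsStrictTotalOrder (Fin n) (Pr j))
    (hQSTO : ∀ j, IsStrictTotalOrder (Fin n) (Q j))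
    (hab : a ≠ b) (hac : a ≠ c) (had : a ≠ d) (hbc : b ≠ c) (hbd : b ≠ d) (hcd : c ≠ d)
    (hS : S = {a, b, c, d}) (hagree : ∀ j, j ≠ a → Q j = Pr j) :
    psi4 S a b c d Pr a = psi4 S a b c d Q a ∨
      Pr a (psi4 S a b c d Pr a) (psi4 S a b c d Q a) := by
  have haS : a ∈ S := by simp [hS]
  have hbS : b ∈ S := by simp [hS]
  have hQb : Q b = Pr b := hagree b (Ne.symm hab)
  have hQc : Q c = Pr c := hagree c (Ne.symm hac)
  have hQd : Q d = Pr d := hagree d (Ne.symm had)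
  have hTS : ({a, c, d} : Finset (Fin n)) ⊆ S := by
    intro x hx
    rcases memT hx with rfl | rfl | rfl <;> simp [hS]
  by_cases hoth : maxOn (Pr b) S = a ∧
      (maxOn (Pr b) (S.erase a) = c ∨ maxOn (Pr b) (S.erase a) = d) ∧
      maxOn (Pr c) {a, c, d} ≠ c ∧ maxOn (Pr d) {a, c, d} ≠ d ∧
      ¬ (maxOn (Pr c) {a, c, d} = d ∧ maxOn (Pr d) {a, c, d} = c)
  · obtain ⟨hχb, htor, hθc, hθd, hmut⟩ := hoth
    have hFc : maxOn (Pr c) S ≠ c := by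
      rcases memT (maxOn_mem (hSTO c) (⟨a, by simp⟩ :
          ({a, c, d} : Finset (Fin n)).Nonempty)) with h | h | h
      · exact FS_ne (hSTO c) hTS (by simp) h hac
      · exact absurd h hθc
      · exact FS_ne (hSTO c) hTS (by simp) h (Ne.symm hcd)
    have hFd : maxOn (Pr d) S ≠ d := by
      rcases memT (maxOn_mem (hSTO d) (⟨a, by simp⟩ :
          ({a, c, d} : Finset (Fin n)).Nonempty)) with h | h | h
      · exact FS_ne (hSTO d) hTS (by simp) h had
      · exact FS_ne (hSTO d) hTS (by simp) h hcd
      · exact absurd h hθd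
    have hmutS : ¬ (maxOn (Pr c) S = d ∧ maxOn (Pr d) S = c) := by
      rintro ⟨h1, h2⟩
      exact hmut ⟨F_to_theta (hSTO c) hTS ⟨a, haS⟩ (by simp) h1,
        F_to_theta (hSTO d) hTS ⟨a, haS⟩ (by simp) h2⟩
    by_cases hχa : maxOn (Pr a) S = b
    · have hEP : E4 Pr S a b c d := ⟨hχa, hχb, htor, hθc, hθd, hmut⟩
      rw [psi4_pos hEP, alloc4_a]
      have hvq : psi4 S a b c d Q a ∈ S := psi4_mem hQSTO hS haS
      rcases eq_or_ne b (psi4 S a b c d Q a) with he | hne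
      · exact Or.inl he
      · exact Or.inr (maxOn_beats (hSTO a) hχa hvq (Ne.symm hne))
    · have hEP : ¬ E4 Pr S a b c d := fun hE => hχa hE.1
      rw [psi4_neg hEP]
      have hvp : ttcA Pr S a = maxOn (Pr a) S :=
        val_a4 hSTO hab hac had hbc hbd hcd hS hχb hFc hFd hmutS
      by_cases hEQ : E4 Q S a b c d
      · rw [psi4_pos hEQ, alloc4_a, hvp]
        exact Or.inr (maxOn_beats (hSTO a) rfl hbS (fun h => hχa h.symm))
      · rw [psi4_neg hEQ]
        exact ttc_SP hSTO hQSTO hagree S haS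
  · have h1 : ¬ E4 Pr S a b c d := fun hE => hoth ⟨hE.2.1, hE.2.2.1, hE.2.2.2.1,
      hE.2.2.2.2.1, hE.2.2.2.2.2⟩
    have h2 : ¬ E4 Q S a b c d := fun hE => hoth (by
      rw [← hQb, ← hQc, ← hQd]
      exact ⟨hE.2.1, hE.2.2.1, hE.2.2.2.1, hE.2.2.2.2.1, hE.2.2.2.2.2⟩)
    rw [psi4_neg h1, psi4_neg h2]
    exact ttc_SP hSTO hQSTO hagree S haS

lemma psi4_SP_b (hSTO : ∀ j, IsStrictTotalOrder (Fin n) (Pr j))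
    (hQSTO : ∀ j, IsStrictTotalOrder (Fin n) (Q j))
    (hab : a ≠ b) (hac : a ≠ c) (had : a ≠ d) (hbc : b ≠ c) (hbd : b ≠ d) (hcd : c ≠ d)
    (hS : S = {a, b, c, d}) (hagree : ∀ j, j ≠ b → Q j = Pr j)
    (hgapP : maxOn (Pr b) S = a → maxOn (Pr b) (S.erase a) ≠ b)
    (hgapQ : maxOn (Q b) S = a → maxOn (Q b) (S.erase a) ≠ b) :
    psi4 S a b c d Pr b = psi4 S a b c d Q b ∨
      Pr b (psi4 S a b c d Pr b) (psi4 S a b c d Q b) := by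
  have haS : a ∈ S := by simp [hS]
  have hbS : b ∈ S := by simp [hS]
  have hQa : Q a = Pr a := hagree a hab
  have hQc : Q c = Pr c := hagree c (Ne.symm hbc)
  have hQd : Q d = Pr d := hagree d (Ne.symm hbd)
  have hberase : b ∈ S.erase a := Finset.mem_erase.2 ⟨Ne.symm hab, hbS⟩
  have hTS : ({a, c, d} : Finset (Fin n)) ⊆ S := by
    intro x hx
    rcases memT hx with rfl | rfl | rfl <;> simp [hS]
  have heraseMem : ∀ x ∈ S.erase a, x = b ∨ x = c ∨ x = d := by
    intro x hx
    obtain ⟨hxa, hxS⟩ := Finset.mem_erase.1 hx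
    rw [hS] at hxS
    rcases (by simpa using hxS : x = a ∨ x = b ∨ x = c ∨ x = d) with h | h | h | h
    · exact absurd h hxa
    · exact Or.inl h
    · exact Or.inr (Or.inl h)
    · exact Or.inr (Or.inr h)
  by_cases hoth : maxOn (Pr a) S = b ∧ maxOn (Pr c) {a, c, d} ≠ c ∧
      maxOn (Pr d) {a, c, d} ≠ d ∧
      ¬ (maxOn (Pr c) {a, c, d} = d ∧ maxOn (Pr d) {a, c, d} = c)
  · obtain ⟨hχa, hθc, hθd, hmut⟩ := hoth
    have hFc : maxOn (Pr c) S ≠ c := by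
      rcases memT (maxOn_mem (hSTO c) (⟨a, by simp⟩ :
          ({a, c, d} : Finset (Fin n)).Nonempty)) with h | h | h
      · exact FS_ne (hSTO c) hTS (by simp) h hac
      · exact absurd h hθc
      · exact FS_ne (hSTO c) hTS (by simp) h (Ne.symm hcd)
    have hFd : maxOn (Pr d) S ≠ d := by
      rcases memT (maxOn_mem (hSTO d) (⟨a, by simp⟩ :
          ({a, c, d} : Finset (Fin n)).Nonempty)) with h | h | h
      · exact FS_ne (hSTO d) hTS (by simp) h had
      · exact FS_ne (hSTO d) hTS (by simp) h hcd
      · exact absurd h hθd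
    have hmutS : ¬ (maxOn (Pr c) S = d ∧ maxOn (Pr d) S = c) := by
      rintro ⟨h1, h2⟩
      exact hmut ⟨F_to_theta (hSTO c) hTS ⟨a, haS⟩ (by simp) h1,
        F_to_theta (hSTO d) hTS ⟨a, haS⟩ (by simp) h2⟩
    by_cases hχb : maxOn (Pr b) S = a
    · have htor : maxOn (Pr b) (S.erase a) = c ∨ maxOn (Pr b) (S.erase a) = d := by
        rcases heraseMem _ (maxOn_mem (hSTO b) ⟨b, hberase⟩) with h | h | h
        · exact absurd h (hgapP hχb)
        · exact Or.inl h
        · exact Or.inr h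
      have hEP : E4 Pr S a b c d := ⟨hχa, hχb, htor, hθc, hθd, hmut⟩
      rw [psi4_pos hEP, alloc4_b hab hcd htor]
      by_cases hEQ : E4 Q S a b c d
      · rw [psi4_pos hEQ, alloc4_b hab hcd hEQ.2.2.1]
        have hmemQ : maxOn (Q b) (S.erase a) ∈ S.erase a :=
          maxOn_mem (hQSTO b) ⟨b, hberase⟩
        rcases eq_or_ne (maxOn (Pr b) (S.erase a)) (maxOn (Q b) (S.erase a)) with he | hne
        · exact Or.inl he
        · exact Or.inr (maxOn_beats (hSTO b) rfl hmemQ (Ne.symm hne))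
      · have hχbQ : maxOn (Q b) S ≠ a := by
          intro hQχ
          apply hEQ
          refine ⟨by rw [hQa]; exact hχa, hQχ, ?_, by rw [hQc]; exact hθc,
            by rw [hQd]; exact hθd, by rw [hQc, hQd]; exact hmut⟩
          rcases heraseMem _ (maxOn_mem (hQSTO b) ⟨b, hberase⟩) with h | h | h
          · exact absurd h (hgapQ hQχ)
          · exact Or.inl h
          · exact Or.inr h
        rw [psi4_neg hEQ]
        have hvq : ttcA Q S b = maxOn (Q b) S :=
          val_b4 hQSTO hab hac had hbc hbd hcd hS (by rw [hQa]; exact hχa)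
            (by rw [hQc]; exact hFc) (by rw [hQd]; exact hFd)
            (by rw [hQc, hQd]; exact hmutS)
        rw [hvq]
        have hβS : maxOn (Q b) S ∈ S := maxOn_mem (hQSTO b) ⟨b, hbS⟩
        have hβerase : maxOn (Q b) S ∈ S.erase a := Finset.mem_erase.2 ⟨hχbQ, hβS⟩
        rcases eq_or_ne (maxOn (Pr b) (S.erase a)) (maxOn (Q b) S) with he | hne
        · exact Or.inl he
        · exact Or.inr (maxOn_beats (hSTO b) rfl hβerase (Ne.symm hne))
    · have hEP : ¬ E4 Pr S a b c d := fun hE => hχb hE.2.1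
      rw [psi4_neg hEP]
      have hvp : ttcA Pr S b = maxOn (Pr b) S :=
        val_b4 hSTO hab hac had hbc hbd hcd hS hχa hFc hFd hmutS
      by_cases hEQ : E4 Q S a b c d
      · rw [psi4_pos hEQ, alloc4_b hab hcd hEQ.2.2.1, hvp]
        have hmemQ : maxOn (Q b) (S.erase a) ∈ S :=
          Finset.mem_of_mem_erase (maxOn_mem (hQSTO b) ⟨b, hberase⟩)
        rcases eq_or_ne (maxOn (Pr b) S) (maxOn (Q b) (S.erase a)) with he | hne
        · exact Or.inl he
        · exact Or.inr (maxOn_beats (hSTO b) rfl hmemQ (Ne.symm hne))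
      · rw [psi4_neg hEQ]
        exact ttc_SP hSTO hQSTO hagree S hbS
  · have h1 : ¬ E4 Pr S a b c d := fun hE => hoth ⟨hE.1, hE.2.2.2.1,
      hE.2.2.2.2.1, hE.2.2.2.2.2⟩
    have h2 : ¬ E4 Q S a b c d := fun hE => hoth (by
      rw [← hQa, ← hQc, ← hQd]
      exact ⟨hE.1, hE.2.2.2.1, hE.2.2.2.2.1, hE.2.2.2.2.2⟩)
    rw [psi4_neg h1, psi4_neg h2]
    exact ttc_SP hSTO hQSTO hagree S hbS

end PSI4SP

end TTCdev


namespace TTCdev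

variable {n : ℕ} [NeZero n]

section PSI4SPC

variable {Pr Q : Fin n → PrefRel n} {S : Finset (Fin n)} {a b c d : Fin n}

lemma psi4_SP_c (hSTO : ∀ j, IsStrictTotalOrder (Fin n) (Pr j))
    (hQSTO : ∀ j, IsStrictTotalOrder (Fin n) (Q j))
    (hab : a ≠ b) (hac : a ≠ c) (had : a ≠ d) (hbc : b ≠ c) (hbd : b ≠ d) (hcd : c ≠ d)
    (hS : S = {a, b, c, d}) (hagree : ∀ j, j ≠ c → Q j = Pr j) :
    psi4 S a b c d Pr c = psi4 S a b c d Q c ∨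
      Pr c (psi4 S a b c d Pr c) (psi4 S a b c d Q c) := by
  have hcS : c ∈ S := by simp [hS]
  have hQa : Q a = Pr a := hagree a hac
  have hQb : Q b = Pr b := hagree b hbc
  have hQd : Q d = Pr d := hagree d (Ne.symm hcd)
  by_cases hoth : maxOn (Pr a) S = b ∧ maxOn (Pr b) S = a ∧
      (maxOn (Pr b) (S.erase a) = c ∨ maxOn (Pr b) (S.erase a) = d) ∧
      maxOn (Pr d) {a, c, d} ≠ d
  case neg =>
    have h1 : ¬ E4 Pr S a b c d := fun hE => hoth ⟨hE.1, hE.2.1, hE.2.2.1, hE.2.2.2.2.1⟩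
    have h2 : ¬ E4 Q S a b c d := fun hE => hoth (by
      rw [← hQa, ← hQb, ← hQd]
      exact ⟨hE.1, hE.2.1, hE.2.2.1, hE.2.2.2.2.1⟩)
    rw [psi4_neg h1, psi4_neg h2]
    exact ttc_SP hSTO hQSTO hagree S hcS
  case pos =>
  obtain ⟨hχa, hχb, htor, hθd⟩ := hoth
  have hχaQ : maxOn (Q a) S = b := by rw [hQa]; exact hχa
  have hχbQ : maxOn (Q b) S = a := by rw [hQb]; exact hχb
  have htorQ : maxOn (Q b) (S.erase a) = c ∨ maxOn (Q b) (S.erase a) = d := by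
    rw [hQb]; exact htor
  have hθdQ : maxOn (Q d) {a, c, d} ≠ d := by rw [hQd]; exact hθd
  have hEPchar : E4 Pr S a b c d ↔ (maxOn (Pr c) {a, c, d} ≠ c ∧
      ¬ (maxOn (Pr c) {a, c, d} = d ∧ maxOn (Pr d) {a, c, d} = c)) :=
    ⟨fun hE => ⟨hE.2.2.2.1, hE.2.2.2.2.2⟩,
     fun ⟨h4, h6⟩ => ⟨hχa, hχb, htor, h4, hθd, h6⟩⟩
  have hEQchar : E4 Q S a b c d ↔ (maxOn (Q c) {a, c, d} ≠ c ∧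
      ¬ (maxOn (Q c) {a, c, d} = d ∧ maxOn (Pr d) {a, c, d} = c)) := by
    constructor
    · intro hE
      refine ⟨hE.2.2.2.1, ?_⟩
      rw [← hQd]
      exact hE.2.2.2.2.2
    · rintro ⟨h4, h6⟩
      exact ⟨hχaQ, hχbQ, htorQ, h4, hθdQ, by rw [hQd]; exact h6⟩
  have houtP : ttcA Pr S c =
      (if maxOn (Pr c) {c, d} = d ∧ maxOn (Pr d) {c, d} = c then d else c) :=
    val_uv4 hSTO hab hac had hbc hbd hcd hS hχa hχb
  have houtQ : ttcA Q S c =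
      (if maxOn (Q c) {c, d} = d ∧ maxOn (Pr d) {c, d} = c then d else c) := by
    have h := val_uv4 hQSTO hab hac had hbc hbd hcd hS hχaQ hχbQ
    rwa [hQd] at h
  -- θ-to-pair conversions
  have hpair_c : ∀ {R : PrefRel n}, IsStrictTotalOrder (Fin n) R →
      maxOn R {a, c, d} = c → maxOn R {c, d} = c := fun hR h =>
    maxOn_pair_of hR hcd (maxOn_beats hR h (by simp) (Ne.symm hcd))
  have hpair_d : ∀ {R : PrefRel n}, IsStrictTotalOrder (Fin n) R →
      maxOn R {a, c, d} = d → maxOn R {c, d} = d := fun hR h => by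
    rw [Finset.pair_comm]
    exact maxOn_pair_of hR (Ne.symm hcd) (maxOn_beats hR h (by simp) hcd)
  -- alloc value at c for both t-branches
  have hallocC : ∀ (R : Fin n → PrefRel n), maxOn (R b) (S.erase a) = c →
      alloc4 R S a b c d c = (if maxOn (R c) {a, c, d} = a then a else d) := by
    intro R htc'
    unfold alloc4
    rw [if_pos htc']
    by_cases h : maxOn (R c) {a, c, d} = a
    · rw [if_pos h, if_pos h]; exact cyc3_c hac hbc
    · rw [if_neg h, if_neg h]; exact cyc4_c hac hbc
  have hallocCd : ∀ (R : Fin n → PrefRel n), maxOn (R b) (S.erase a) = d →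
      alloc4 R S a b c d c = (if maxOn (R d) {a, c, d} = a then c else a) := by
    intro R htd'
    unfold alloc4
    rw [if_neg (fun h' => hcd (h'.symm.trans htd'))]
    by_cases h : maxOn (R d) {a, c, d} = a
    · rw [if_pos h, if_pos h]; exact cyc3_other (Ne.symm hac) (Ne.symm hbc) hcd
    · rw [if_neg h, if_neg h]; exact cyc4_d hac hbc (Ne.symm hcd)
  have hθPmem : maxOn (Pr c) {a, c, d} = a ∨ maxOn (Pr c) {a, c, d} = c ∨
      maxOn (Pr c) {a, c, d} = d :=
    memT (maxOn_mem (hSTO c) ⟨a, by simp⟩)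
  have hθQmem : maxOn (Q c) {a, c, d} = a ∨ maxOn (Q c) {a, c, d} = c ∨
      maxOn (Q c) {a, c, d} = d :=
    memT (maxOn_mem (hQSTO c) ⟨a, by simp⟩)
  -- beats facts from the truthful θ
  rcases htor with htc | htd
  · -- t = c
    have htcQ : maxOn (Q b) (S.erase a) = c := by rw [hQb]; exact htc
    rcases hθPmem with hθP | hθP | hθP
    · -- truth: θP = a ; P is in the exception, c receives a
      have hEP : E4 Pr S a b c d := hEPchar.2 ⟨fun h => hac (hθP.symm.trans h),
        fun ⟨h1, _⟩ => had (hθP.symm.trans h1)⟩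
      rw [psi4_pos hEP, hallocC Pr htc, if_pos hθP]
      have hbeats_d : Pr c a d := maxOn_beats (hSTO c) hθP (by simp) (Ne.symm had)
      have hbeats_c : Pr c a c := maxOn_beats (hSTO c) hθP (by simp) (Ne.symm hac)
      by_cases hEQ : E4 Q S a b c d
      · rw [psi4_pos hEQ, hallocC Q htcQ]
        by_cases hθQ : maxOn (Q c) {a, c, d} = a
        · rw [if_pos hθQ]; exact Or.inl rfl
        · rw [if_neg hθQ]; exact Or.inr hbeats_d
      · rw [psi4_neg hEQ, houtQ]
        by_cases hcnd : maxOn (Q c) {c, d} = d ∧ maxOn (Pr d) {c, d} = c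
        · rw [if_pos hcnd]; exact Or.inr hbeats_d
        · rw [if_neg hcnd]; exact Or.inr hbeats_c
    · -- truth: θP = c ; P is out, c keeps c
      have hEP : ¬ E4 Pr S a b c d := fun hE => (hEPchar.1 hE).1 hθP
      have hsPc : maxOn (Pr c) {c, d} = c := hpair_c (hSTO c) hθP
      rw [psi4_neg hEP, houtP, if_neg (fun ⟨h1, _⟩ => hcd (hsPc.symm.trans h1))]
      have hbeats_a : Pr c c a := maxOn_beats (hSTO c) hθP (by simp) hac
      have hbeats_d : Pr c c d := maxOn_beats (hSTO c) hθP (by simp) (Ne.symm hcd)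
      by_cases hEQ : E4 Q S a b c d
      · rw [psi4_pos hEQ, hallocC Q htcQ]
        by_cases hθQ : maxOn (Q c) {a, c, d} = a
        · rw [if_pos hθQ]; exact Or.inr hbeats_a
        · rw [if_neg hθQ]; exact Or.inr hbeats_d
      · rw [psi4_neg hEQ, houtQ]
        by_cases hcnd : maxOn (Q c) {c, d} = d ∧ maxOn (Pr d) {c, d} = c
        · rw [if_pos hcnd]; exact Or.inr hbeats_d
        · rw [if_neg hcnd]; exact Or.inl rfl
    · -- truth: θP = d
      have hbeats_a : Pr c d a := maxOn_beats (hSTO c) hθP (by simp) had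
      have hbeats_c : Pr c d c := maxOn_beats (hSTO c) hθP (by simp) hcd
      have hsPc : maxOn (Pr c) {c, d} = d := hpair_d (hSTO c) hθP
      by_cases hθdc : maxOn (Pr d) {a, c, d} = c
      · -- mutual: P is out, c gets d by trade
        have hEP : ¬ E4 Pr S a b c d := fun hE => (hEPchar.1 hE).2 ⟨hθP, hθdc⟩
        have hsd : maxOn (Pr d) {c, d} = c := hpair_c (hSTO d) hθdc
        rw [psi4_neg hEP, houtP, if_pos ⟨hsPc, hsd⟩]
        by_cases hEQ : E4 Q S a b c d
        · rw [psi4_pos hEQ, hallocC Q htcQ]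
          by_cases hθQ : maxOn (Q c) {a, c, d} = a
          · rw [if_pos hθQ]; exact Or.inr hbeats_a
          · rw [if_neg hθQ]; exact Or.inl rfl
        · rw [psi4_neg hEQ, houtQ]
          by_cases hcnd : maxOn (Q c) {c, d} = d ∧ maxOn (Pr d) {c, d} = c
          · rw [if_pos hcnd]; exact Or.inl rfl
          · rw [if_neg hcnd]; exact Or.inr hbeats_c
      · -- θd = a : P in the exception with the 4-cycle, c gets d
        have hθda : maxOn (Pr d) {a, c, d} = a := theta_a_of hSTO hθd hθdc
        have hEP : E4 Pr S a b c d := hEPchar.2 ⟨fun h => (Ne.symm hcd) (hθP.symm.trans h),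
          fun ⟨_, h2⟩ => hθdc h2⟩
        rw [psi4_pos hEP, hallocC Pr htc, if_neg (fun h => had (h.symm.trans hθP))]
        by_cases hEQ : E4 Q S a b c d
        · rw [psi4_pos hEQ, hallocC Q htcQ]
          by_cases hθQ : maxOn (Q c) {a, c, d} = a
          · rw [if_pos hθQ]; exact Or.inr hbeats_a
          · rw [if_neg hθQ]; exact Or.inl rfl
        · -- Q out: since θd = a, it must be θQ = c, so c keeps c
          have hθQc : maxOn (Q c) {a, c, d} = c := by
            rcases hθQmem with h | h | h
            · exact absurd (hEQchar.2 ⟨fun h' => hac (h.symm.trans h'),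
                fun ⟨h1, _⟩ => had (h.symm.trans h1)⟩) hEQ
            · exact h
            · exact absurd (hEQchar.2 ⟨fun h' => (Ne.symm hcd) (h.symm.trans h'),
                fun ⟨_, h2⟩ => hθdc h2⟩) hEQ
          have hsQc : maxOn (Q c) {c, d} = c := hpair_c (hQSTO c) hθQc
          rw [psi4_neg hEQ, houtQ, if_neg (fun ⟨h1, _⟩ => hcd (hsQc.symm.trans h1))]
          exact Or.inr hbeats_c
  · -- t = d
    have htdQ : maxOn (Q b) (S.erase a) = d := by rw [hQb]; exact htd
    by_cases hθdc : maxOn (Pr d) {a, c, d} = c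
    · -- θd = c : in the exception c receives a; out: trade with d possible
      have hsd : maxOn (Pr d) {c, d} = c := hpair_c (hSTO d) hθdc
      have hvinP : E4 Pr S a b c d → psi4 S a b c d Pr c = a := fun hE => by
        rw [psi4_pos hE, hallocCd Pr htd, if_neg (fun h => hac (h.symm.trans hθdc))]
      have hQdne : ¬ maxOn (Q d) {a, c, d} = a := by
        rw [hQd]
        exact fun h => hac (h.symm.trans hθdc)
      have hvinQ : E4 Q S a b c d → psi4 S a b c d Q c = a := fun hE => by
        rw [psi4_pos hE, hallocCd Q htdQ, if_neg hQdne]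
      rcases hθPmem with hθP | hθP | hθP
      · -- truth θP = a : in the exception, c gets a (its top among {a,c,d})
        have hEP : E4 Pr S a b c d := hEPchar.2 ⟨fun h => hac (hθP.symm.trans h),
          fun ⟨h1, _⟩ => had (hθP.symm.trans h1)⟩
        rw [hvinP hEP]
        have hbeats_d : Pr c a d := maxOn_beats (hSTO c) hθP (by simp) (Ne.symm had)
        have hbeats_c : Pr c a c := maxOn_beats (hSTO c) hθP (by simp) (Ne.symm hac)
        by_cases hEQ : E4 Q S a b c d
        · rw [hvinQ hEQ]; exact Or.inl rfl
        · rw [psi4_neg hEQ, houtQ]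
          by_cases hcnd : maxOn (Q c) {c, d} = d ∧ maxOn (Pr d) {c, d} = c
          · rw [if_pos hcnd]; exact Or.inr hbeats_d
          · rw [if_neg hcnd]; exact Or.inr hbeats_c
      · -- truth θP = c : out, keeps c
        have hEP : ¬ E4 Pr S a b c d := fun hE => (hEPchar.1 hE).1 hθP
        have hsPc : maxOn (Pr c) {c, d} = c := hpair_c (hSTO c) hθP
        rw [psi4_neg hEP, houtP, if_neg (fun ⟨h1, _⟩ => hcd (hsPc.symm.trans h1))]
        have hbeats_a : Pr c c a := maxOn_beats (hSTO c) hθP (by simp) hac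
        have hbeats_d : Pr c c d := maxOn_beats (hSTO c) hθP (by simp) (Ne.symm hcd)
        by_cases hEQ : E4 Q S a b c d
        · rw [hvinQ hEQ]; exact Or.inr hbeats_a
        · rw [psi4_neg hEQ, houtQ]
          by_cases hcnd : maxOn (Q c) {c, d} = d ∧ maxOn (Pr d) {c, d} = c
          · rw [if_pos hcnd]; exact Or.inr hbeats_d
          · rw [if_neg hcnd]; exact Or.inl rfl
      · -- truth θP = d : out with mutual trade, c gets d
        have hEP : ¬ E4 Pr S a b c d := fun hE => (hEPchar.1 hE).2 ⟨hθP, hθdc⟩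
        have hsPc : maxOn (Pr c) {c, d} = d := hpair_d (hSTO c) hθP
        rw [psi4_neg hEP, houtP, if_pos ⟨hsPc, hsd⟩]
        have hbeats_a : Pr c d a := maxOn_beats (hSTO c) hθP (by simp) had
        have hbeats_c : Pr c d c := maxOn_beats (hSTO c) hθP (by simp) hcd
        by_cases hEQ : E4 Q S a b c d
        · rw [hvinQ hEQ]; exact Or.inr hbeats_a
        · rw [psi4_neg hEQ, houtQ]
          by_cases hcnd : maxOn (Q c) {c, d} = d ∧ maxOn (Pr d) {c, d} = c
          · rw [if_pos hcnd]; exact Or.inl rfl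
          · rw [if_neg hcnd]; exact Or.inr hbeats_c
    · -- θd = a : in the exception c keeps c; out: no trade available either
      have hθda : maxOn (Pr d) {a, c, d} = a := theta_a_of hSTO hθd hθdc
      have hvalP : psi4 S a b c d Pr c = c := by
        by_cases hEP : E4 Pr S a b c d
        · rw [psi4_pos hEP, hallocCd Pr htd, if_pos hθda]
        · have hθPc : maxOn (Pr c) {a, c, d} = c := by
            rcases hθPmem with h | h | h
            · exact absurd (hEPchar.2 ⟨fun h' => hac (h.symm.trans h'),
                fun ⟨h1, _⟩ => had (h.symm.trans h1)⟩) hEP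
            · exact h
            · exact absurd (hEPchar.2 ⟨fun h' => (Ne.symm hcd) (h.symm.trans h'),
                fun ⟨_, h2⟩ => hθdc h2⟩) hEP
          have hsPc : maxOn (Pr c) {c, d} = c := hpair_c (hSTO c) hθPc
          rw [psi4_neg hEP, houtP, if_neg (fun ⟨h1, _⟩ => hcd (hsPc.symm.trans h1))]
      have hvalQ : psi4 S a b c d Q c = c := by
        by_cases hEQ : E4 Q S a b c d
        · have hQda : maxOn (Q d) {a, c, d} = a := by rw [hQd]; exact hθda
          rw [psi4_pos hEQ, hallocCd Q htdQ, if_pos hQda]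
        · have hθQc : maxOn (Q c) {a, c, d} = c := by
            rcases hθQmem with h | h | h
            · exact absurd (hEQchar.2 ⟨fun h' => hac (h.symm.trans h'),
                fun ⟨h1, _⟩ => had (h.symm.trans h1)⟩) hEQ
            · exact h
            · exact absurd (hEQchar.2 ⟨fun h' => (Ne.symm hcd) (h.symm.trans h'),
                fun ⟨_, h2⟩ => hθdc h2⟩) hEQ
          have hsQc : maxOn (Q c) {c, d} = c := hpair_c (hQSTO c) hθQc
          rw [psi4_neg hEQ, houtQ, if_neg (fun ⟨h1, _⟩ => hcd (hsQc.symm.trans h1))]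
      rw [hvalP, hvalQ]
      exact Or.inl rfl

end PSI4SPC

end TTCdev


namespace TTCdev

variable {n : ℕ} [NeZero n]

section GLUE

variable {Pr Q : Fin n → PrefRel n} {S : Finset (Fin n)} {a b c d : Fin n}

lemma psi4_SP (hSTO : ∀ j, IsStrictTotalOrder (Fin n) (Pr j))
    (hQSTO : ∀ j, IsStrictTotalOrder (Fin n) (Q j))
    (hab : a ≠ b) (hac : a ≠ c) (had : a ≠ d) (hbc : b ≠ c) (hbd : b ≠ d) (hcd : c ≠ d)
    (hS : S = {a, b, c, d}) {i : Fin n} (hi : i ∈ S) (hagree : ∀ j, j ≠ i → Q j = Pr j)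
    (hgapP : maxOn (Pr b) S = a → maxOn (Pr b) (S.erase a) ≠ b)
    (hgapQ : maxOn (Q b) S = a → maxOn (Q b) (S.erase a) ≠ b) :
    psi4 S a b c d Pr i = psi4 S a b c d Q i ∨
      Pr i (psi4 S a b c d Pr i) (psi4 S a b c d Q i) := by
  rw [hS] at hi
  rcases (by simpa using hi : i = a ∨ i = b ∨ i = c ∨ i = d) with h | h | h | h
  · subst h
    exact psi4_SP_a hSTO hQSTO hab hac had hbc hbd hcd hS hagree
  · subst h
    exact psi4_SP_b hSTO hQSTO hab hac had hbc hbd hcd hS hagree hgapP hgapQ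
  · subst h
    exact psi4_SP_c hSTO hQSTO hab hac had hbc hbd hcd hS hagree
  · subst h
    rw [psi4_comm hcd (Pr := Pr), psi4_comm hcd (Pr := Q)]
    exact psi4_SP_c hSTO hQSTO hab had hac hbd hbc (Ne.symm hcd) (hS.trans pairS) hagree

/-- each agent's TTC value is the maximum of their preference over some submarket
containing them -/
lemma ttc_value_is_max (hSTO : ∀ i, IsStrictTotalOrder (Fin n) (Pr i)) :
    ∀ X : Finset (Fin n), ∀ i ∈ X, ∃ X' : Finset (Fin n), i ∈ X' ∧ X' ⊆ X ∧
      ttcA Pr X i = maxOn (Pr i) X' := by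
  intro X
  induction X using Finset.strongInduction with
  | _ X ih =>
    intro i hi
    have hX : X.Nonempty := ⟨i, hi⟩
    by_cases hc : i ∈ core Pr X
    · exact ⟨X, hi, Finset.Subset.refl X, ttcA_core hX hc⟩
    · have hss : X \ core Pr X ⊂ X := Finset.sdiff_ssubset core_subset (core_nonempty hX)
      obtain ⟨X', hiX', hsub, hval⟩ := ih _ hss i (Finset.mem_sdiff.2 ⟨hi, hc⟩)
      exact ⟨X', hiX', hsub.trans (Finset.sdiff_subset), by rw [ttcA_rest hX hc]; exact hval⟩

end GLUE

end TTCdev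


namespace TTCdev

variable {n : ℕ} [NeZero n]

/-- outside agents all prefer their own object to everything in S -/
def REG (Pr : Fin n → PrefRel n) (S : Finset (Fin n)) : Prop :=
  ∀ k, k ∉ S → ∀ o ∈ S, Pr k k o

/-- the global mechanism: in the regime, the inner mechanism allocates S among its
owners and everyone else gets their full-market TTC object; otherwise plain TTC -/
def phiOf (S : Finset (Fin n)) (inner : (Fin n → PrefRel n) → Fin n → Fin n)
    (Pr : Fin n → PrefRel n) : Fin n → Fin n :=
  if REG Pr S then (fun i => if i ∈ S then inner Pr i else ttcA Pr Finset.univ i)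
  else ttcA Pr Finset.univ

section GLOBAL

variable {Pr Q : Fin n → PrefRel n} {S : Finset (Fin n)}
  {inner : (Fin n → PrefRel n) → Fin n → Fin n}

lemma phi_neg (h : ¬ REG Pr S) : phiOf S inner Pr = ttcA Pr Finset.univ := if_neg h

lemma phi_in (h : REG Pr S) {i : Fin n} (hi : i ∈ S) :
    phiOf S inner Pr i = inner Pr i := by
  rw [phiOf, if_pos h]
  simp [hi]

lemma phi_out (h : REG Pr S) {k : Fin n} (hk : k ∉ S) :
    phiOf S inner Pr k = ttcA Pr Finset.univ k := by
  rw [phiOf, if_pos h]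
  simp [hk]

lemma phi_val_out {k : Fin n} (hk : k ∉ S) :
    phiOf S inner Pr k = ttcA Pr Finset.univ k := by
  by_cases h : REG Pr S
  · exact phi_out h hk
  · rw [phi_neg h]

lemma reg_out (hSTO : ∀ i, IsStrictTotalOrder (Fin n) (Pr i)) (hreg : REG Pr S)
    {k : Fin n} (hk : k ∉ S) : ttcA Pr Finset.univ k ∉ S := by
  intro hmem
  obtain ⟨X', hkX', _, hval⟩ :=
    ttc_value_is_max hSTO Finset.univ k (Finset.mem_univ k)
  have hne : k ≠ ttcA Pr Finset.univ k := fun h => hk (h ▸ hmem)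
  have hspec : Pr k (ttcA Pr Finset.univ k) k :=
    maxOn_beats (hSTO k) hval.symm hkX' hne
  exact sto_asymm (hSTO k) hspec (hreg k hk _ hmem)

lemma maps_compl_to_compl {f : Fin n → Fin n} (hinj : Function.Injective f)
    (S : Finset (Fin n)) (h : ∀ k, k ∉ S → f k ∉ S) : ∀ i ∈ S, f i ∈ S := by
  intro i hi
  by_contra hnot
  have h1 : (insert i (Finset.univ \ S)).image f ⊆ Finset.univ \ S := by
    intro y hy
    obtain ⟨x, hx, rfl⟩ := Finset.mem_image.1 hy
    rcases Finset.mem_insert.1 hx with rfl | hx'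
    · exact Finset.mem_sdiff.2 ⟨Finset.mem_univ _, hnot⟩
    · exact Finset.mem_sdiff.2 ⟨Finset.mem_univ _, h x (Finset.mem_sdiff.1 hx').2⟩
  have hiSc : i ∉ Finset.univ \ S := by
    rw [Finset.mem_sdiff]
    push_neg
    exact fun _ => hi
  have hcontra : (Finset.univ \ S).card + 1 ≤ (Finset.univ \ S).card := by
    calc (Finset.univ \ S).card + 1 = (insert i (Finset.univ \ S)).card :=
          (Finset.card_insert_of_notMem hiSc).symm
      _ = ((insert i (Finset.univ \ S)).image f).card :=
          (Finset.card_image_of_injective _ hinj).symm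
      _ ≤ (Finset.univ \ S).card := Finset.card_le_card h1
  omega

lemma reg_in (hSTO : ∀ i, IsStrictTotalOrder (Fin n) (Pr i)) (hreg : REG Pr S)
    {i : Fin n} (hi : i ∈ S) : ttcA Pr Finset.univ i ∈ S :=
  maps_compl_to_compl (ttc_inj hSTO Finset.univ) S (fun k hk => reg_out hSTO hreg hk) i hi

lemma phi_bij (hSTO : ∀ i, IsStrictTotalOrder (Fin n) (Pr i))
    (hInnerMem : ∀ x ∈ S, inner Pr x ∈ S) (hInnerInj : Function.Injective (inner Pr)) :
    Function.Bijective (phiOf S inner Pr) := by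
  rw [← Finite.injective_iff_bijective]
  by_cases hreg : REG Pr S
  · intro p q h
    by_cases hp : p ∈ S <;> by_cases hq : q ∈ S
    · rw [phi_in hreg hp, phi_in hreg hq] at h
      exact hInnerInj h
    · exfalso
      rw [phi_in hreg hp, phi_out hreg hq] at h
      exact reg_out hSTO hreg hq (h ▸ hInnerMem p hp)
    · exfalso
      rw [phi_out hreg hp, phi_in hreg hq] at h
      exact reg_out hSTO hreg hp (h.symm ▸ hInnerMem q hq)
    · rw [phi_out hreg hp, phi_out hreg hq] at h
      exact ttc_inj hSTO Finset.univ h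
  · rw [phi_neg hreg]
    exact ttc_inj hSTO Finset.univ

lemma phi_IR (hSTO : ∀ i, IsStrictTotalOrder (Fin n) (Pr i))
    (hInnerIR : ∀ i ∈ S, inner Pr i = i ∨ Pr i (inner Pr i) i) :
    ∀ i, phiOf S inner Pr i = i ∨ Pr i (phiOf S inner Pr i) i := by
  intro i
  by_cases hreg : REG Pr S
  · by_cases hi : i ∈ S
    · rw [phi_in hreg hi]
      exact hInnerIR i hi
    · rw [phi_out hreg hi]
      exact ttc_IR hSTO Finset.univ i (Finset.mem_univ i)
  · rw [phi_neg hreg]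
    exact ttc_IR hSTO Finset.univ i (Finset.mem_univ i)

lemma phi_SP (hSTO : ∀ i, IsStrictTotalOrder (Fin n) (Pr i))
    (hQSTO : ∀ i, IsStrictTotalOrder (Fin n) (Q i)) {i : Fin n}
    (hagree : ∀ j, j ≠ i → Q j = Pr j)
    (hInnerSP : i ∈ S → (inner Pr i = inner Q i ∨ Pr i (inner Pr i) (inner Q i))) :
    phiOf S inner Pr i = phiOf S inner Q i ∨
      Pr i (phiOf S inner Pr i) (phiOf S inner Q i) := by
  by_cases hiS : i ∈ S
  · have hreg_iff : REG Q S ↔ REG Pr S := by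
      constructor
      · intro h k hk o ho
        have := h k hk o ho
        rwa [hagree k (fun he => (he ▸ hk) hiS)] at this
      · intro h k hk o ho
        rw [hagree k (fun he => (he ▸ hk) hiS)]
        exact h k hk o ho
    by_cases hreg : REG Pr S
    · rw [phi_in hreg hiS, phi_in (hreg_iff.2 hreg) hiS]
      exact hInnerSP hiS
    · rw [phi_neg hreg, phi_neg (fun h => hreg (hreg_iff.1 h))]
      exact ttc_SP hSTO hQSTO hagree Finset.univ (Finset.mem_univ i)
  · rw [phi_val_out hiS, phi_val_out hiS]
    exact ttc_SP hSTO hQSTO hagree Finset.univ (Finset.mem_univ i)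

lemma phi_PE (hSTO : ∀ i, IsStrictTotalOrder (Fin n) (Pr i))
    (hInnerPE : ∀ y : Fin n → Fin n,
      (∀ p ∈ S, ∀ q ∈ S, y p = y q → p = q) → (∀ i ∈ S, y i ∈ S) →
      (∀ i ∈ S, y i = inner Pr i ∨ Pr i (y i) (inner Pr i)) →
      ∀ i ∈ S, y i = inner Pr i) :
    ∀ y : Fin n → Fin n, Function.Bijective y →
      (∀ i, y i = phiOf S inner Pr i ∨ Pr i (y i) (phiOf S inner Pr i)) →
      ∀ i, y i = phiOf S inner Pr i := by
  intro y hybij hdom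
  by_cases hreg : REG Pr S
  · -- step 1: outside agents stay outside under y
    have houtmaps : ∀ k, k ∉ S → y k ∉ S := by
      intro k hk hymem
      have hφ : phiOf S inner Pr k = ttcA Pr Finset.univ k := phi_out hreg hk
      have hφout : phiOf S inner Pr k ∉ S := by
        rw [hφ]; exact reg_out hSTO hreg hk
      have hyne : y k ≠ phiOf S inner Pr k := fun h => hφout (h ▸ hymem)
      have hpref : Pr k (y k) (phiOf S inner Pr k) := by
        rcases hdom k with h | h
        · exact absurd h hyne
        · exact h
      have hIRk : phiOf S inner Pr k = k ∨ Pr k (phiOf S inner Pr k) k := by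
        rw [hφ]
        exact ttc_IR hSTO Finset.univ k (Finset.mem_univ k)
      have hregk : Pr k k (y k) := hreg k hk _ hymem
      rcases hIRk with h | h
      · rw [h] at hpref
        exact sto_asymm (hSTO k) hpref hregk
      · haveI := hSTO k
        exact irrefl_of (Pr k) (y k) (trans_of (Pr k) (trans_of (Pr k) hpref h) hregk)
    have hinmaps : ∀ i ∈ S, y i ∈ S :=
      maps_compl_to_compl hybij.injective S houtmaps
    -- step 2: outside agents get their TTC objects
    have houter : ∀ k, k ∉ S → y k = ttcA Pr Finset.univ k := by
      have hy'dom : ∀ j ∈ Finset.univ, (fun i => if i ∈ S then ttcA Pr Finset.univ i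
          else y i) j = ttcA Pr Finset.univ j ∨
          Pr j ((fun i => if i ∈ S then ttcA Pr Finset.univ i else y i) j)
            (ttcA Pr Finset.univ j) := by
        intro j _
        by_cases hj : j ∈ S
        · exact Or.inl (by simp [hj])
        · have := hdom j
          rw [phi_out hreg hj] at this
          simpa [hj] using this
      have hy'inj : ∀ p ∈ Finset.univ, ∀ q ∈ Finset.univ,
          (fun i => if i ∈ S then ttcA Pr Finset.univ i else y i) p =
          (fun i => if i ∈ S then ttcA Pr Finset.univ i else y i) q → p = q := by
        intro p _ q _ h
        simp only at h
        by_cases hp : p ∈ S <;> by_cases hq : q ∈ S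
        · rw [if_pos hp, if_pos hq] at h
          exact ttc_inj hSTO Finset.univ h
        · exfalso
          rw [if_pos hp, if_neg hq] at h
          exact houtmaps q hq (h ▸ reg_in hSTO hreg hp)
        · exfalso
          rw [if_neg hp, if_pos hq] at h
          exact houtmaps p hp (h.symm ▸ reg_in hSTO hreg hq)
        · rw [if_neg hp, if_neg hq] at h
          exact hybij.injective h
      have hy'maps : ∀ j ∈ Finset.univ,
          (fun i => if i ∈ S then ttcA Pr Finset.univ i else y i) j ∈ Finset.univ :=
        fun j _ => Finset.mem_univ _
      have := ttc_PE hSTO Finset.univ _ hy'inj hy'maps hy'dom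
      intro k hk
      have hres := this k (Finset.mem_univ k)
      simpa only [if_neg hk] using hres
    -- step 3: inner agents follow the inner mechanism
    have hinner : ∀ i ∈ S, y i = inner Pr i := by
      apply hInnerPE y
      · intro p _ q _ h
        exact hybij.injective h
      · exact hinmaps
      · intro i hi
        have := hdom i
        rwa [phi_in hreg hi] at this
    intro i
    by_cases hi : i ∈ S
    · rw [phi_in hreg hi]
      exact hinner i hi
    · rw [phi_out hreg hi]
      exact houter i hi
  · rw [phi_neg hreg] at hdom ⊢
    intro i
    exact ttc_PE hSTO Finset.univ y (fun p _ q _ h => hybij.injective h)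
      (fun j _ => Finset.mem_univ _) (fun j _ => hdom j) i (Finset.mem_univ i)

end GLOBAL

end TTCdev

end

open TTCdev in
theorem stmt17 {n : ℕ} (D : Set (PrefRel n))
    (hD : ∀ P ∈ D, IsStrictTotalOrder (Fin n) P)
    (O' : Set (Fin n)) (hcard : O'.ncard ≤ 4)
    (hfail : failsTopTwoFor D O')
    (hout : ∀ o : Fin n, o ∉ O' → ∃ P ∈ D, top P (O' ∪ {o}) o) :
    ∃ φ : Profile n (fun _ => D) → Fin n → Fin n,
      (∀ P, Function.Bijective (φ P)) ∧ IR φ ∧ ParetoEff φ ∧ SP φ ∧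
      ∃ P, ¬ isTTC P.1 (φ P) := by
  classical
  obtain ⟨a, b, haO, hbO, hab, ⟨PA, hPAD, hPAtop⟩, ⟨PB, hPBD, hPBtop⟩, hgap⟩ := hfail
  haveI : NeZero n := ⟨Nat.pos_iff_ne_zero.mp a.pos⟩
  set S : Finset (Fin n) := (Set.toFinite O').toFinset with hSdef
  have hmemS : ∀ x, x ∈ S ↔ x ∈ O' := fun x => Set.Finite.mem_toFinset _
  have haS : a ∈ S := (hmemS a).2 haO
  have hbS : b ∈ S := (hmemS b).2 hbO
  have topOf : ∀ P ∈ D, ∀ x ∈ O', (∀ c ∈ O', c ≠ x → P x c) → maxOn P S = x := by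
    intro P hPD x hx hspec
    exact maxOn_eq_of (hD P hPD) ((hmemS x).2 hx)
      (fun j hj hne => hspec j ((hmemS j).1 hj) hne)
  have topA : maxOn PA S = a := topOf PA hPAD a haO hPAtop.2
  have topB : maxOn PB S = b := topOf PB hPBD b hbO hPBtop.2
  have hgapM : ∀ P, P ∈ D → maxOn P S = a → maxOn P (S.erase a) ≠ b := by
    intro P hPD hPa hPb
    apply hgap P hPD
    · exact ⟨haO, fun c hc hne => maxOn_beats (hD P hPD) hPa ((hmemS c).2 hc) hne⟩
    · constructor
      · exact ⟨hbO, fun h => hab (Set.mem_singleton_iff.1 h).symm⟩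
      · intro c hc hne
        refine maxOn_beats (hD P hPD) hPb ?_ hne
        exact Finset.mem_erase.2 ⟨fun h => hc.2 (Set.mem_singleton_iff.2 h),
          (hmemS c).2 hc.1⟩
  have hbdiff : b ∈ O' \ {a} := ⟨hbO, fun h => hab (Set.mem_singleton_iff.1 h).symm⟩
  have hnt : ¬ top PA (O' \ {a}) b := hgap PA hPAD hPAtop
  have hex : ¬ ∀ c ∈ O' \ {a}, c ≠ b → PA b c := fun h => hnt ⟨hbdiff, h⟩
  push_neg at hex
  obtain ⟨e, heO, hebne, _⟩ := hex
  have heO' : e ∈ O' := heO.1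
  have hea : e ≠ a := fun h => heO.2 (Set.mem_singleton_iff.2 h)
  have hae : a ≠ e := Ne.symm hea
  have hbe : b ≠ e := Ne.symm hebne
  have heS : e ∈ S := (hmemS e).2 heO'
  have hcardS : S.card = O'.ncard := (Set.ncard_eq_toFinset_card O' (Set.toFinite O')).symm
  have hsub3 : ({a, b, e} : Finset (Fin n)) ⊆ S := by
    intro x hx
    rcases (by simpa using hx : x = a ∨ x = b ∨ x = e) with rfl | rfl | rfl
    · exact haS
    · exact hbS
    · exact heS
  have hcard3 : ({a, b, e} : Finset (Fin n)).card = 3 := by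
    rw [Finset.card_insert_of_notMem (by simp [hab, hae]),
      Finset.card_insert_of_notMem (by simp [hbe]), Finset.card_singleton]
  have hge3 : 3 ≤ S.card := hcard3 ▸ Finset.card_le_card hsub3
  have hle4 : S.card ≤ 4 := by rw [hcardS]; exact hcard
  -- the profile used for the witness
  choose Rout hRoutD hRouttop using hout
  set Pstar : Fin n → PrefRel n :=
    fun i => if h : i ∈ O' then (if i = a then PB else PA) else Rout i h with hPstar
  have hPmem : ∀ i, Pstar i ∈ D := by
    intro i
    simp only [hPstar]
    by_cases h : i ∈ O'
    · rw [dif_pos h]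
      by_cases h2 : i = a
      · rw [if_pos h2]; exact hPBD
      · rw [if_neg h2]; exact hPAD
    · rw [dif_neg h]
      exact hRoutD i h
  have hPsa : Pstar a = PB := by
    simp only [hPstar]
    rw [dif_pos haO]
    simp
  have hPsb : Pstar b = PA := by
    simp only [hPstar]
    rw [dif_pos hbO, if_neg (fun h => hab h.symm)]
  have hPse : Pstar e = PA := by
    simp only [hPstar]
    rw [dif_pos heO', if_neg hea]
  have hreg : REG Pstar S := by
    intro k hk o ho
    have hkO : k ∉ O' := fun h => hk ((hmemS k).2 h)
    have hPsk : Pstar k = Rout k hkO := by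
      simp only [hPstar]
      rw [dif_neg hkO]
    rw [hPsk]
    exact (hRouttop k hkO).2 o (Set.mem_union_left _ ((hmemS o).1 ho))
      (fun h => hk (h ▸ ho))
  have htPA3 : ∀ (hS3 : S = {a, b, e}), maxOn PA (S.erase a) = e := by
    intro hS3
    rcases erase3_mem hab hae hS3 _ (maxOn_mem (hD PA hPAD)
        ⟨b, Finset.mem_erase.2 ⟨Ne.symm hab, hbS⟩⟩) with h | h
    · exact absurd h (hgapM PA hPAD topA)
    · exact h
  rcases (by omega : S.card = 3 ∨ S.card = 4) with h3 | h4
  · -- three objects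
    have hS3 : S = {a, b, e} := by
      refine (Finset.eq_of_subset_of_card_le hsub3 ?_).symm
      rw [hcard3, h3]
    refine ⟨fun P => phiOf S (psi3 S a b e) P.1, ?_, ?_, ?_, ?_, ?_⟩
    · intro P
      have hSTO : ∀ i, IsStrictTotalOrder (Fin n) (P.1 i) := fun i => hD _ (P.2 i)
      exact phi_bij hSTO (fun x hx => psi3_mem hSTO hab hae hbe hS3 hx)
        (psi3_inj hSTO hab hae hbe)
    · intro P i
      have hSTO : ∀ i, IsStrictTotalOrder (Fin n) (P.1 i) := fun i => hD _ (P.2 i)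
      exact phi_IR hSTO (psi3_IR hSTO hab hae hbe hS3) i
    · intro P y hybij hdom
      have hSTO : ∀ i, IsStrictTotalOrder (Fin n) (P.1 i) := fun i => hD _ (P.2 i)
      exact phi_PE hSTO (psi3_PE hSTO hab hae hbe hS3) y hybij hdom
    · intro P Q i hagree
      have hSTO : ∀ i, IsStrictTotalOrder (Fin n) (P.1 i) := fun i => hD _ (P.2 i)
      have hQSTO : ∀ i, IsStrictTotalOrder (Fin n) (Q.1 i) := fun i => hD _ (Q.2 i)
      exact phi_SP hSTO hQSTO hagree (fun hiS =>
        psi3_SP hSTO hQSTO hab hae hbe hS3 hiS hagree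
          (hgapM _ (P.2 b)) (hgapM _ (Q.2 b)))
    · refine ⟨⟨Pstar, hPmem⟩, ?_⟩
      rintro ⟨hxbij, r, hr⟩
      have hr' : ∀ i : Fin n, r (phiOf S (psi3 S a b e) Pstar i) = r i ∧
          ∀ o : Fin n, r i ≤ r o → o ≠ phiOf S (psi3 S a b e) Pstar i →
            Pstar i (phiOf S (psi3 S a b e) Pstar i) o := hr
      have hE3 : E3 Pstar S a b e := by
        refine ⟨?_, ?_, ?_, ?_⟩
        · rw [hPsa]; exact topB
        · rw [hPsb]; exact topA
        · rw [hPsb]; exact htPA3 hS3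
        · rw [hPse]
          exact maxOn_pair_of (hD PA hPAD) hae (hPAtop.2 e heO' hea)
      have hxa : phiOf S (psi3 S a b e) Pstar a = b := by
        rw [phi_in hreg haS, psi3_pos hE3, cyc3_a]
      have hxb : phiOf S (psi3 S a b e) Pstar b = e := by
        rw [phi_in hreg hbS, psi3_pos hE3, cyc3_b hab]
      have h1 : r b = r a := by
        have := (hr' a).1
        rwa [hxa] at this
      have hba := (hr' b).2 a (le_of_eq h1) (by rw [hxb]; exact hae)
      rw [hxb, hPsb] at hba
      exact sto_asymm (hD PA hPAD) (hPAtop.2 e heO' hea) hba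
  · -- four objects
    have hdiff : (S \ {a, b, e}).Nonempty := by
      rw [← Finset.card_pos, Finset.card_sdiff_of_subset hsub3, hcard3, h4]
      norm_num
    obtain ⟨f, hf⟩ := hdiff
    obtain ⟨hfS, hfnot⟩ := Finset.mem_sdiff.1 hf
    have hfO' : f ∈ O' := (hmemS f).1 hfS
    have haf : a ≠ f := fun h => hfnot (by simp [← h])
    have hbf : b ≠ f := fun h => hfnot (by simp [← h])
    have hef : e ≠ f := fun h => hfnot (by simp [← h])
    have hsub4 : ({a, b, e, f} : Finset (Fin n)) ⊆ S := by
      intro x hx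
      rcases (by simpa using hx : x = a ∨ x = b ∨ x = e ∨ x = f) with rfl | rfl | rfl | rfl
      · exact haS
      · exact hbS
      · exact heS
      · exact hfS
    have hcard4 : ({a, b, e, f} : Finset (Fin n)).card = 4 := by
      rw [Finset.card_insert_of_notMem (by simp [hab, hae, haf]),
        Finset.card_insert_of_notMem (by simp [hbe, hbf]),
        Finset.card_insert_of_notMem (by simp [hef]), Finset.card_singleton]
    have hS4 : S = {a, b, e, f} := by
      refine (Finset.eq_of_subset_of_card_le hsub4 ?_).symm
      rw [hcard4, h4]
    have hPsf : Pstar f = PA := by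
      simp only [hPstar]
      rw [dif_pos hfO', if_neg (fun h => haf h.symm)]
    have heraseMem4 : ∀ x ∈ S.erase a, x = b ∨ x = e ∨ x = f := by
      intro x hx
      obtain ⟨hxa, hxS⟩ := Finset.mem_erase.1 hx
      rw [hS4] at hxS
      rcases (by simpa using hxS : x = a ∨ x = b ∨ x = e ∨ x = f) with h | h | h | h
      · exact absurd h hxa
      · exact Or.inl h
      · exact Or.inr (Or.inl h)
      · exact Or.inr (Or.inr h)
    have htor : maxOn PA (S.erase a) = e ∨ maxOn PA (S.erase a) = f := by
      rcases heraseMem4 _ (maxOn_mem (hD PA hPAD)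
          ⟨b, Finset.mem_erase.2 ⟨Ne.symm hab, hbS⟩⟩) with h | h | h
      · exact absurd h (hgapM PA hPAD topA)
      · exact Or.inl h
      · exact Or.inr h
    have hTae : maxOn PA {a, e, f} = a := by
      apply maxOn_eq_of (hD PA hPAD) (by simp)
      intro j hj hne
      rcases memT hj with h | h | h
      · exact absurd h hne
      · rw [h]; exact hPAtop.2 e heO' hea
      · rw [h]; exact hPAtop.2 f hfO' (Ne.symm haf)
    refine ⟨fun P => phiOf S (psi4 S a b e f) P.1, ?_, ?_, ?_, ?_, ?_⟩
    · intro P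
      have hSTO : ∀ i, IsStrictTotalOrder (Fin n) (P.1 i) := fun i => hD _ (P.2 i)
      exact phi_bij hSTO (fun x hx => psi4_mem hSTO hS4 hx)
        (psi4_inj hSTO hab hae haf hbe hbf hef)
    · intro P i
      have hSTO : ∀ i, IsStrictTotalOrder (Fin n) (P.1 i) := fun i => hD _ (P.2 i)
      exact phi_IR hSTO (psi4_IR hSTO hab hae haf hbe hbf hef hS4) i
    · intro P y hybij hdom
      have hSTO : ∀ i, IsStrictTotalOrder (Fin n) (P.1 i) := fun i => hD _ (P.2 i)
      exact phi_PE hSTO (psi4_PE hSTO hab hae haf hbe hbf hef hS4) y hybij hdom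
    · intro P Q i hagree
      have hSTO : ∀ i, IsStrictTotalOrder (Fin n) (P.1 i) := fun i => hD _ (P.2 i)
      have hQSTO : ∀ i, IsStrictTotalOrder (Fin n) (Q.1 i) := fun i => hD _ (Q.2 i)
      exact phi_SP hSTO hQSTO hagree (fun hiS =>
        psi4_SP hSTO hQSTO hab hae haf hbe hbf hef hS4 hiS hagree
          (hgapM _ (P.2 b)) (hgapM _ (Q.2 b)))
    · refine ⟨⟨Pstar, hPmem⟩, ?_⟩
      rintro ⟨hxbij, r, hr⟩
      have hr' : ∀ i : Fin n, r (phiOf S (psi4 S a b e f) Pstar i) = r i ∧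
          ∀ o : Fin n, r i ≤ r o → o ≠ phiOf S (psi4 S a b e f) Pstar i →
            Pstar i (phiOf S (psi4 S a b e f) Pstar i) o := hr
      have hE4 : E4 Pstar S a b e f := by
        refine ⟨?_, ?_, ?_, ?_, ?_, ?_⟩
        · rw [hPsa]; exact topB
        · rw [hPsb]; exact topA
        · rw [hPsb]; exact htor
        · rw [hPse, hTae]; exact hae
        · rw [hPsf, hTae]; exact haf
        · rw [hPse, hPsf, hTae]
          rintro ⟨h1, _⟩
          exact haf h1
      have hxa : phiOf S (psi4 S a b e f) Pstar a = b := by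
        rw [phi_in hreg haS, psi4_pos hE4, alloc4_a]
      have h1 : r b = r a := by
        have := (hr' a).1
        rwa [hxa] at this
      rcases htor with hte | htf
      · have hxb : phiOf S (psi4 S a b e f) Pstar b = e := by
          rw [phi_in hreg hbS, psi4_pos hE4]
          unfold alloc4
          rw [if_pos (by rw [hPsb]; exact hte), if_pos (by rw [hPse]; exact hTae),
            cyc3_b hab]
        have hba := (hr' b).2 a (le_of_eq h1) (by rw [hxb]; exact hae)
        rw [hxb, hPsb] at hba
        exact sto_asymm (hD PA hPAD) (hPAtop.2 e heO' hea) hba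
      · have hxb : phiOf S (psi4 S a b e f) Pstar b = f := by
          rw [phi_in hreg hbS, psi4_pos hE4]
          unfold alloc4
          rw [if_neg (by rw [hPsb, htf]; exact Ne.symm hef),
            if_pos (by rw [hPsf]; exact hTae), cyc3_b hab]
        have hba := (hr' b).2 a (le_of_eq h1) (by rw [hxb]; exact haf)
        rw [hxb, hPsb] at hba
        exact sto_asymm (hD PA hPAD) (hPAtop.2 f hfO' (Ne.symm haf)) hba
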